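/- arXiv:1803.07300 — 12 statements merged into one kernel-verified Lean document; each statement's English description precedes it below -/
import Mathlib

section
/- For any real number z, if ℓ(z) := ln(1 + exp(z)) satisfies ℓ(z) ≤ ε for some 0 < ε ≤ 1, then ℓ'(z)/ℓ(z) ≥ 1 − ε, where ℓ'(z) = exp(z)/(1+exp(z)). -/
/-- If the logistic loss `ℓ(z) = ln(1 + exp z)` satisfies `ℓ(z) ≤ ε` for some `0 < ε ≤ 1`,
then `ℓ'(z)/ℓ(z) ≥ 1 - ε`, where `ℓ'(z) = exp z / (1 + exp z)`. -/
theorem logistic_deriv_ratio (z ε : ℝ) (hε0 : 0 < ε) (hε1 : ε ≤ 1)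
    (h : Real.log (1 + Real.exp z) ≤ ε) :
    (Real.exp z / (1 + Real.exp z)) / Real.log (1 + Real.exp z) ≥ 1 - ε := by
  set L := Real.log (1 + Real.exp z) with hLdef
  have hpos : (0:ℝ) < 1 + Real.exp z := by positivity
  have h1 : (1:ℝ) < 1 + Real.exp z := by
    have := Real.exp_pos z; linarith
  have hL : 0 < L := Real.log_pos h1
  have hexpL : Real.exp L = 1 + Real.exp z := Real.exp_log hpos
  have hez : Real.exp z = Real.exp L - 1 := by linarith
  have hkey : L ≤ Real.exp L - 1 := by
    have := Real.add_one_le_exp L; linarith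
  have hEpos : 0 < Real.exp L := Real.exp_pos L
  have step1 : Real.exp (-L) ≤ (Real.exp z / (1 + Real.exp z)) / L := by
    rw [hez, Real.exp_neg, div_div, le_div_iff₀ (mul_pos (by linarith) hL),
      inv_mul_le_iff₀ hEpos]
    have : 1 + (Real.exp L - 1) = Real.exp L := by ring
    rw [this]
    nlinarith
  have step2 : 1 - ε ≤ Real.exp (-L) := by
    have := Real.add_one_le_exp (-L)
    linarith
  linarith
end

section
/- Let A ∈ ℝ^{n×d} with rows of norm at most 1, ℓ convex with ℓ' ≤ ℓ and ℓ'' ≤ ℓ, and R(w) = (1/n)Σ_i ℓ(⟨A_i,w⟩). For w ∈ ℝ^d, η > 0, set ĥ := ηR(w) and suppose ĥ ≤ 1, and let w' = w − η∇R(w). Then R(w') ≤ R(w) and R(w') ≤ R(w)(1 − ĥ(1 − ĥ/2)|∇R(w)|²/R(w)²). -/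
open scoped RealInnerProductSpace

open Set Topology Filter

lemma aux_mono_deriv_nonneg {f : ℝ → ℝ} (hm : Monotone f) {x : ℝ}
    (hd : DifferentiableAt ℝ f x) : 0 ≤ deriv f x := by
  have h := hd.hasDerivAt
  rw [hasDerivAt_iff_tendsto_slope] at h
  have h' : Filter.Tendsto (slope f x) (𝓝[>] x) (𝓝 (deriv f x)) :=
    h.mono_left (nhdsWithin_mono x (fun y hy => ne_of_gt hy))
  refine ge_of_tendsto h' ?_
  filter_upwards [self_mem_nhdsWithin] with y hy
  have hxy : x < y := hy
  rw [slope_def_field]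
  exact div_nonneg (sub_nonneg.2 (hm hxy.le)) (sub_nonneg.2 hxy.le)


set_option maxHeartbeats 1000000 in
/-- One step of gradient descent with normalized step size `ηR(w) ≤ 1` decreases the empirical
risk, multiplicatively: `R(w') ≤ R(w)(1 − ĥ(1 − ĥ/2)|∇R(w)|²/R(w)²)` with `ĥ = ηR(w)`. -/
theorem risk_step_multiplicative {n d : ℕ} (hn : 0 < n)
    (A : Fin n → EuclideanSpace ℝ (Fin d)) (hA : ∀ i, ‖A i‖ ≤ 1)
    (ℓ : ℝ → ℝ) (hconv : ConvexOn ℝ Set.univ ℓ) (hC2 : ContDiff ℝ 2 ℓ)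
    (hℓ' : ∀ z, deriv ℓ z ≤ ℓ z) (hℓ'' : ∀ z, deriv (deriv ℓ) z ≤ ℓ z)
    (R : EuclideanSpace ℝ (Fin d) → ℝ)
    (hR : ∀ w, R w = (1 / (n : ℝ)) * ∑ i, ℓ ⟪A i, w⟫)
    (w : EuclideanSpace ℝ (Fin d)) (η : ℝ) (hη : 0 < η)
    (hstep : η * R w ≤ 1)
    (w' : EuclideanSpace ℝ (Fin d)) (hw' : w' = w - η • gradient R w) :
    R w' ≤ R w ∧
    R w' ≤ R w * (1 - (η * R w) * (1 - (η * R w) / 2) * (‖gradient R w‖ ^ 2 / R w ^ 2)) := by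
  classical
  by_cases hc0 : gradient R w = 0
  · rw [hw', hc0]
    simp
  -- differentiability of ℓ and its derivative
  have hdℓ : Differentiable ℝ ℓ := hC2.differentiable (by norm_num)
  have hdℓ' : Differentiable ℝ (deriv ℓ) := by
    have h2 : ContDiff ℝ ((1 : ℕ) + 1) ℓ := by exact_mod_cast hC2
    rw [contDiff_succ_iff_deriv] at h2
    exact h2.2.2.differentiable (by simp)
  -- nonnegativity of ℓ'' and ℓ
  have hmono : Monotone (deriv ℓ) := by
    have h := hconv.monotoneOn_deriv (fun x _ => (hdℓ x))
    intro x y hxy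
    exact h (mem_univ x) (mem_univ y) hxy
  have hℓ''nn : ∀ z, 0 ≤ deriv (deriv ℓ) z := fun z =>
    aux_mono_deriv_nonneg hmono (hdℓ' z)
  have hℓnn : ∀ z, 0 ≤ ℓ z := fun z => le_trans (hℓ''nn z) (hℓ'' z)
  -- notation
  set v : EuclideanSpace ℝ (Fin d) := gradient R w with hv
  set c : ℝ := ‖v‖ with hcdef
  have hc : 0 < c := norm_pos_iff.mpr hc0
  set a : Fin n → ℝ := fun i => ⟪A i, w⟫ with ha
  set b : Fin n → ℝ := fun i => η * ⟪A i, v⟫ with hb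
  -- gradient formula
  have hgrad : HasGradientAt R ((1/(n:ℝ)) • ∑ i, deriv ℓ (a i) • A i) w := by
    rw [hasGradientAt_iff_hasFDerivAt]
    have h1 : HasFDerivAt (fun x => (1/(n:ℝ)) * ∑ i, ℓ ⟪A i, x⟫)
        ((1/(n:ℝ)) • ∑ i, deriv ℓ (a i) • innerSL ℝ (A i)) w := by
      refine HasFDerivAt.const_mul ?_ _
      refine HasFDerivAt.fun_sum fun i _ => ?_
      have := ((hdℓ ⟪A i, w⟫).hasDerivAt).comp_hasFDerivAt w (innerSL ℝ (A i)).hasFDerivAt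
      simpa [ha, Function.comp_def] using this
    have h2 : (fun x => (1/(n:ℝ)) * ∑ i, ℓ ⟪A i, x⟫) = R := by funext x; rw [hR]
    rw [h2] at h1
    refine h1.congr_fderiv ?_
    refine ContinuousLinearMap.ext fun y => ?_
    simp [InnerProductSpace.toDual_apply_apply, inner_smul_left, sum_inner, real_inner_smul_left,
      ContinuousLinearMap.sum_apply, innerSL_apply_apply]
  have hveq : v = (1/(n:ℝ)) • ∑ i, deriv ℓ (a i) • A i := hgrad.gradient
  -- key inner product identity
  have hkey : (1/(n:ℝ)) * ∑ i, deriv ℓ (a i) * ⟪A i, v⟫ = c^2 := by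
    have h2 : ⟪v, v⟫ = (1/(n:ℝ)) * ∑ i, deriv ℓ (a i) * ⟪A i, v⟫ := by
      nth_rewrite 1 [hveq]
      rw [real_inner_smul_left, sum_inner]
      simp only [real_inner_smul_left]
    rw [hcdef, ← real_inner_self_eq_norm_sq, h2]
  -- the one-dimensional restriction and its derivatives
  set g : ℝ → ℝ := fun t => (1/(n:ℝ)) * ∑ i, ℓ (a i - t * b i) with hgdef
  set g1 : ℝ → ℝ := fun t => (1/(n:ℝ)) * ∑ i, (-(b i)) * deriv ℓ (a i - t * b i) with hg1def
  set g2 : ℝ → ℝ := fun t => (1/(n:ℝ)) * ∑ i, (b i)^2 * deriv (deriv ℓ) (a i - t * b i) with hg2def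
  have hlin : ∀ i, ∀ t : ℝ, HasDerivAt (fun t : ℝ => a i - t * b i) (-(b i)) t := by
    intro i t
    simpa using ((hasDerivAt_id t).mul_const (b i)).const_sub (a i)
  have hgd : ∀ t, HasDerivAt g (g1 t) t := by
    intro t
    have hterm : ∀ i, HasDerivAt (fun t => ℓ (a i - t * b i))
        ((-(b i)) * deriv ℓ (a i - t * b i)) t := by
      intro i
      have := ((hdℓ (a i - t * b i)).hasDerivAt).comp t (hlin i t)
      simpa [mul_comm, Function.comp_def] using this
    have hsum := HasDerivAt.fun_sum (fun i (_ : i ∈ Finset.univ) => hterm i)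
    simpa [hgdef, hg1def] using hsum.const_mul (1/(n:ℝ))
  have hg1d : ∀ t, HasDerivAt g1 (g2 t) t := by
    intro t
    have hterm : ∀ i, HasDerivAt (fun t => (-(b i)) * deriv ℓ (a i - t * b i))
        ((b i)^2 * deriv (deriv ℓ) (a i - t * b i)) t := by
      intro i
      have h := (((hdℓ' (a i - t * b i)).hasDerivAt).comp t (hlin i t)).const_mul (-(b i))
      refine h.congr_deriv ?_
      ring
    have hsum := HasDerivAt.fun_sum (fun i (_ : i ∈ Finset.univ) => hterm i)
    simpa [hg1def, hg2def] using hsum.const_mul (1/(n:ℝ))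
  -- link with R along the segment
  have hgR : ∀ t : ℝ, g t = R (w - (t * η) • v) := by
    intro t
    rw [hR]
    simp only [hgdef]
    congr 1
    refine Finset.sum_congr rfl fun i _ => ?_
    congr 1
    simp only [inner_sub_right, real_inner_smul_right, ha, hb]
    ring
  have hg0 : g 0 = R w := by
    have := hgR 0
    simpa using this
  have hg1R : g 1 = R w' := by
    have := hgR 1
    rw [hw']
    simpa using this
  -- value of g1 at 0
  have hg10 : g1 0 = -(η * c^2) := by
    simp only [hg1def]
    have h1 : ∀ i, (-(b i)) * deriv ℓ (a i - 0 * b i) = -(η * (deriv ℓ (a i) * ⟪A i, v⟫)) := by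
      intro i
      simp only [hb, zero_mul, sub_zero]
      ring
    simp only [h1]
    rw [Finset.sum_neg_distrib, ← Finset.mul_sum]
    have : (1/(n:ℝ)) * -(η * ∑ i, deriv ℓ (a i) * ⟪A i, v⟫)
        = -(η * ((1/(n:ℝ)) * ∑ i, deriv ℓ (a i) * ⟪A i, v⟫)) := by ring
    rw [this, hkey]
  -- bounds
  have hbb : ∀ i, (b i)^2 ≤ (η*c)^2 := by
    intro i
    have h1 : |⟪A i, v⟫| ≤ c := by
      calc |⟪A i, v⟫| ≤ ‖A i‖ * ‖v‖ := abs_real_inner_le_norm _ _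
        _ ≤ 1 * c := by
            exact mul_le_mul_of_nonneg_right (hA i) (norm_nonneg v)
        _ = c := one_mul c
    have h2 : |b i| ≤ η * c := by
      rw [hb, abs_mul, abs_of_pos hη]
      exact mul_le_mul_of_nonneg_left h1 hη.le
    calc (b i)^2 = |b i|^2 := (sq_abs _).symm
      _ ≤ (η*c)^2 := by
          apply pow_le_pow_left₀ (abs_nonneg _) h2
  have hg2le : ∀ t, g2 t ≤ (η*c)^2 * g t := by
    intro t
    rw [hg2def, hgdef, ← mul_assoc, mul_comm ((η*c)^2) (1/(n:ℝ)), mul_assoc, Finset.mul_sum]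
    apply mul_le_mul_of_nonneg_left _ (by positivity)
    apply Finset.sum_le_sum
    intro i _
    calc (b i)^2 * deriv (deriv ℓ) (a i - t * b i)
        ≤ (η*c)^2 * deriv (deriv ℓ) (a i - t * b i) :=
          mul_le_mul_of_nonneg_right (hbb i) (hℓ''nn _)
      _ ≤ (η*c)^2 * ℓ (a i - t * b i) :=
          mul_le_mul_of_nonneg_left (hℓ'' _) (by positivity)
  have hg0nn : 0 ≤ g 0 := by
    rw [hgdef]
    apply mul_nonneg (by positivity)
    exact Finset.sum_nonneg fun i _ => hℓnn _
  have hstep' : η * g 0 ≤ 1 := by rw [hg0]; exact hstep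
  -- Claim A : derivative bound on intervals where g ≤ g 0
  have claimA : ∀ T : ℝ, T ≤ 1 → (∀ s, 0 ≤ s → s ≤ T → g s ≤ g 0) →
      ∀ s, 0 ≤ s → s ≤ T → g1 s ≤ η * c^2 * (η * g 0 * s - 1) := by
    intro T hT hbound s hs0 hsT
    have hφ : AntitoneOn (fun u => g1 u - (η*c)^2 * g 0 * u) (Icc 0 T) := by
      apply antitoneOn_of_deriv_nonpos (convex_Icc 0 T)
      · apply Continuous.continuousOn
        have : Differentiable ℝ g1 := fun u => (hg1d u).differentiableAt
        exact (this.continuous).sub (continuous_const.mul continuous_id)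
      · intro x _
        exact (((hg1d x).differentiableAt).sub
          (((hasDerivAt_id x).const_mul ((η*c)^2 * g 0)).differentiableAt)).differentiableWithinAt
      · intro x hx
        rw [interior_Icc] at hx
        have hd : HasDerivAt (fun u => g1 u - (η*c)^2 * g 0 * u) (g2 x - (η*c)^2 * g 0) x := by
          have := (hg1d x).sub (((hasDerivAt_id x).const_mul ((η*c)^2 * g 0)))
          simpa [mul_comm, Pi.sub_def] using this
        rw [hd.deriv]
        have h1 := hg2le x
        have h2 := hbound x hx.1.le hx.2.le
        nlinarith [sq_nonneg (η*c)]
    have hmem0 : (0:ℝ) ∈ Icc (0:ℝ) T := left_mem_Icc.2 (le_trans hs0 hsT)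
    have hmems : s ∈ Icc (0:ℝ) T := ⟨hs0, hsT⟩
    have h := hφ hmem0 hmems hs0
    simp only [mul_zero, sub_zero] at h
    have heq : η * c^2 * (η * g 0 * s - 1) = -(η*c^2) + (η*c)^2 * g 0 * s := by ring
    rw [heq]
    linarith [hg10]
  -- Claim B : g stays below g 0 on [0,1]
  have claimB : ∀ t, 0 ≤ t → t ≤ 1 → g t ≤ g 0 := by
    by_contra hB
    push_neg at hB
    obtain ⟨t₀, ht₀0, ht₀1, ht₀⟩ := hB
    set Bs : Set ℝ := {t | 0 ≤ t ∧ t ≤ 1 ∧ g 0 < g t} with hBsdef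
    have hBne : Bs.Nonempty := ⟨t₀, ht₀0, ht₀1, ht₀⟩
    have hBbdd : BddBelow Bs := ⟨0, fun x hx => hx.1⟩
    set T := sInf Bs with hTdef
    have hT0 : 0 ≤ T := le_csInf hBne fun x hx => hx.1
    have hT1 : T ≤ 1 := le_trans (csInf_le hBbdd ⟨ht₀0, ht₀1, ht₀⟩) ht₀1
    have hless : ∀ s, 0 ≤ s → s < T → g s ≤ g 0 := by
      intro s hs hsT
      by_contra h
      push_neg at h
      have hsB : s ∈ Bs := ⟨hs, le_trans hsT.le hT1, h⟩
      exact absurd (csInf_le hBbdd hsB) (not_le.2 hsT)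
    have hgT : g T ≤ g 0 := by
      rcases eq_or_lt_of_le hT0 with h0 | h0
      · rw [← h0]
      · have hcont : Filter.Tendsto g (𝓝[<] T) (𝓝 (g T)) :=
          ((hgd T).differentiableAt.continuousAt).continuousWithinAt
        refine le_of_tendsto hcont ?_
        filter_upwards [Ioo_mem_nhdsLT_of_mem (⟨h0, le_refl T⟩ : T ∈ Ioc (0:ℝ) T)] with y hy
        exact hless y hy.1.le hy.2
    have hall : ∀ s, 0 ≤ s → s ≤ T → g s ≤ g 0 := by
      intro s hs hsT
      rcases lt_or_eq_of_le hsT with h | h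
      · exact hless s hs h
      · rw [h]; exact hgT
    rcases eq_or_lt_of_le hT1 with hTeq | hTlt
    · obtain ⟨x, hx⟩ := hBne
      have hx1 : x = 1 := le_antisymm hx.2.1 (by rw [← hTeq]; exact csInf_le hBbdd hx)
      have : g x ≤ g 0 := by
        rw [hx1]
        exact hall 1 zero_le_one (by rw [hTeq])
      exact absurd hx.2.2 (not_lt.2 this)
    · have hg1T : g1 T ≤ η * c^2 * (η * g 0 * T - 1) := claimA T hTlt.le hall T hT0 le_rfl
      have hneg : g1 T < 0 := by
        have h1 : η * g 0 * T ≤ T := by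
          have h := mul_le_mul_of_nonneg_right hstep' hT0
          linarith
        have h2 : η * g 0 * T - 1 < 0 := by linarith
        have h3 : 0 < η * c^2 := by positivity
        exact lt_of_le_of_lt hg1T (mul_neg_of_pos_of_neg h3 h2)
      have hslope : Filter.Tendsto (slope g T) (𝓝[>] T) (𝓝 (g1 T)) := by
        have h := hasDerivAt_iff_tendsto_slope.1 (hgd T)
        exact h.mono_left (nhdsWithin_mono T fun y hy => ne_of_gt hy)
      have hev : ∀ᶠ y in 𝓝[>] T, slope g T y < 0 :=
        hslope.eventually (eventually_lt_nhds hneg)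
      have hev2 : ∀ᶠ y in 𝓝[>] T, g y ≤ g 0 := by
        filter_upwards [hev, self_mem_nhdsWithin] with y h1 h2
        have hy : T < y := h2
        rw [slope_def_field] at h1
        have h3 := mul_neg_of_neg_of_pos h1 (sub_pos.2 hy)
        rw [div_mul_cancel₀ _ (by linarith : y - T ≠ 0)] at h3
        linarith
      obtain ⟨u, hu, hIoo⟩ := (nhdsGT_basis T).eventually_iff.mp hev2
      have hinf : sInf Bs < u := lt_of_le_of_lt (le_of_eq hTdef.symm) hu
      obtain ⟨x, hxB, hxu⟩ := (csInf_lt_iff hBbdd hBne).1 hinf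
      have hxT : T ≤ x := csInf_le hBbdd hxB
      rcases eq_or_lt_of_le hxT with h | h
      · exact absurd hxB.2.2 (not_lt.2 (by rw [← h]; exact hgT))
      · exact absurd hxB.2.2 (not_lt.2 (hIoo ⟨h, hxu⟩))
  -- final Taylor estimate
  have hfinal : g 1 ≤ g 0 - η * c^2 + (η*c)^2 * g 0 / 2 := by
    have hψ : MonotoneOn (fun t => (g 0 - η*c^2*t + (η*c)^2 * g 0 * t^2/2) - g t) (Icc (0:ℝ) 1) := by
      apply monotoneOn_of_deriv_nonneg (convex_Icc 0 1)
      · apply Continuous.continuousOn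
        have hdg : Differentiable ℝ g := fun u => (hgd u).differentiableAt
        have hgc : Continuous g := hdg.continuous
        have hpolyc : Continuous (fun t : ℝ => g 0 - η*c^2*t + (η*c)^2 * g 0 * t^2/2) := by
          exact (continuous_const.sub (continuous_const.mul continuous_id)).add
            ((continuous_const.mul (continuous_pow 2)).div_const _)
        exact hpolyc.sub hgc
      · intro x _
        have h1 : DifferentiableAt ℝ (fun t : ℝ => g 0 - η*c^2*t + (η*c)^2 * g 0 * t^2/2) x := by
          exact ((differentiableAt_const _).sub ((differentiableAt_const _).mul differentiableAt_id)).add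
            (((differentiableAt_pow 2).const_mul _).div_const _)
        exact (h1.sub (hgd x).differentiableAt).differentiableWithinAt
      · intro x hx
        rw [interior_Icc] at hx
        have hd : HasDerivAt (fun t => (g 0 - η*c^2*t + (η*c)^2 * g 0 * t^2/2) - g t)
            ((-(η*c^2) + (η*c)^2 * g 0 * x) - g1 x) x := by
          have hpoly : HasDerivAt (fun t : ℝ => g 0 - η*c^2*t + (η*c)^2 * g 0 * t^2/2)
              (-(η*c^2) + (η*c)^2 * g 0 * x) x := by
            have h1 : HasDerivAt (fun t : ℝ => g 0 - η*c^2*t) (-(η*c^2)) x := by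
              simpa using ((hasDerivAt_id x).const_mul (η*c^2)).const_sub (g 0)
            have h2 : HasDerivAt (fun t : ℝ => (η*c)^2 * g 0 * t^2/2) ((η*c)^2 * g 0 * x) x := by
              have := ((hasDerivAt_pow 2 x).const_mul ((η*c)^2 * g 0)).div_const 2
              refine this.congr_deriv ?_
              ring
            exact h1.add h2
          exact hpoly.sub (hgd x)
        rw [hd.deriv]
        have h := claimA 1 le_rfl claimB x hx.1.le hx.2.le
        have heq : η * c^2 * (η * g 0 * x - 1) = -(η*c^2) + (η*c)^2 * g 0 * x := by ring
        rw [heq] at h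
        linarith
    have h := hψ (left_mem_Icc.2 zero_le_one) (right_mem_Icc.2 zero_le_one) zero_le_one
    have h2 : (g 0 - η*c^2*0 + (η*c)^2 * g 0 * 0^2/2) - g 0
        ≤ (g 0 - η*c^2*1 + (η*c)^2 * g 0 * 1^2/2) - g 1 := h
    have h0 : ((g 0 - η*c^2*0 + (η*c)^2 * g 0 * 0^2/2) - g 0) = 0 := by ring
    have h1' : ((g 0 - η*c^2*1 + (η*c)^2 * g 0 * 1^2/2) - g 1)
        = g 0 - η * c^2 + (η*c)^2 * g 0 / 2 - g 1 := by ring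
    rw [h0, h1'] at h2
    linarith
  -- conclude
  constructor
  · rw [← hg1R, ← hg0]
    exact claimB 1 zero_le_one le_rfl
  · rw [← hg1R, ← hg0]
    rcases eq_or_lt_of_le hg0nn with h0 | h0
    · have hpos : 0 ≤ η * c^2 := by positivity
      have hle : g 1 ≤ 0 := by
        rw [← h0] at hfinal
        nlinarith [sq_nonneg (η*c)]
      rw [← h0]
      simpa using hle
    · have heq : g 0 * (1 - (η * g 0) * (1 - (η * g 0) / 2) * (c ^ 2 / g 0 ^ 2))
          = g 0 - η * c^2 + (η*c)^2 * g 0 / 2 := by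
        field_simp
        ring
      rw [heq]
      exact hfinal
end

section
/- Under the hypotheses of the previous smoothness lemma, gradient descent iterates w_0, w_1, …, w_t with w_{j+1} = w_j − η_j ∇R(w_j), ĥ_j := η_j R(w_j) ≤ 1, and γ_j := |∇R(w_j)|/R(w_j) satisfy R(w_t) ≤ R(w_0) exp(−Σ_{j<t} ĥ_j (1 − ĥ_j/2) γ_j²), and moreover |w_t − w_0| ≤ Σ_{j<t} ĥ_j γ_j. -/
open scoped RealInnerProductSpace
open Filter Set Topology

lemma aux_deriv_ell_contdiff (ℓ : ℝ → ℝ) (hC2 : ContDiff ℝ 2 ℓ) :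
    Differentiable ℝ (deriv ℓ) := by
  have h2 : ContDiff ℝ ((1 : ℕ∞) + 1) ℓ := by
    exact_mod_cast hC2
  exact (contDiff_succ_iff_deriv.mp h2).2.2.differentiable (by simp)

lemma aux_deriv2_nonneg (ℓ : ℝ → ℝ) (hconv : ConvexOn ℝ Set.univ ℓ)
    (hC2 : ContDiff ℝ 2 ℓ) (z : ℝ) : 0 ≤ deriv (deriv ℓ) z := by
  have hdiff : Differentiable ℝ ℓ := hC2.differentiable (by norm_num)
  have hmono : Monotone (deriv ℓ) :=
    monotoneOn_univ.mp (hconv.monotoneOn_deriv (fun x _ => hdiff x))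
  have h := ((aux_deriv_ell_contdiff ℓ hC2) z).hasDerivAt
  have ht : Tendsto (slope (deriv ℓ) z) (𝓝[>] z) (𝓝 (deriv (deriv ℓ) z)) :=
    (hasDerivAt_iff_tendsto_slope.mp h).mono_left
      (nhdsWithin_mono _ (fun x hx => ne_of_gt hx))
  refine ge_of_tendsto ht ?_
  filter_upwards [self_mem_nhdsWithin] with x hx
  rw [slope_def_field]
  exact div_nonneg (sub_nonneg.2 (hmono (le_of_lt hx))) (sub_nonneg.2 (le_of_lt hx))

lemma aux_antitone (g g' : ℝ → ℝ) (hd : ∀ s, HasDerivAt g (g' s) s) (m : ℝ) (hm : 0 ≤ m)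
    (h : ∀ u ∈ Set.Ioo (0:ℝ) m, g' u ≤ 0) : ∀ u ∈ Set.Icc (0:ℝ) m, g u ≤ g 0 := by
  intro u hu
  have hanti : AntitoneOn g (Set.Icc 0 m) := by
    refine antitoneOn_of_deriv_nonpos (convex_Icc 0 m)
      (fun s _ => (hd s).continuousAt.continuousWithinAt)
      (fun s _ => (hd s).differentiableAt.differentiableWithinAt)
      (fun s hs => ?_)
    rw [interior_Icc] at hs
    rw [(hd s).deriv]
    exact h s hs
  exact hanti (left_mem_Icc.2 hm) hu hu.1

lemma aux_key (f f' f'' : ℝ → ℝ)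
    (hd1 : ∀ s, HasDerivAt f (f' s) s) (hd2 : ∀ s, HasDerivAt f' (f'' s) s)
    (K : ℝ) (hK : 0 ≤ K)
    (hb : ∀ s ∈ Set.Icc (0:ℝ) 1, f'' s ≤ K * f s)
    (hneg : f' 0 < 0) (h0 : K * f 0 ≤ -f' 0) :
    f 1 ≤ f 0 + f' 0 + K * f 0 / 2 := by
  have helper : ∀ m ∈ Set.Icc (0:ℝ) 1, (∀ u ∈ Set.Icc (0:ℝ) m, f u ≤ f 0) →
      ∀ u ∈ Set.Icc (0:ℝ) m, f' u ≤ (1 - u) * f' 0 := by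
    intro m hm hfle u hu
    have := aux_antitone (fun u => f' u + f' 0 * u) (fun u => f'' u + f' 0)
      (fun u => (hd2 u).add (by simpa using (hasDerivAt_id u).const_mul (f' 0))) m hm.1
      (fun v hv => by
        have h1 : f'' v ≤ K * f v := hb v ⟨hv.1.le, hv.2.le.trans hm.2⟩
        have h2 : K * f v ≤ K * f 0 := mul_le_mul_of_nonneg_left
          (hfle v ⟨hv.1.le, hv.2.le⟩) hK
        show f'' v + f' 0 ≤ 0
        linarith) u hu
    simp only [mul_zero, add_zero] at this
    linarith [this]
  -- Step 1: f ≤ f 0 on [0,1]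
  have hA : ∀ s ∈ Set.Icc (0:ℝ) 1, f s ≤ f 0 := by
    by_contra hcon
    push_neg at hcon
    obtain ⟨s₀, hs₀, hfs₀⟩ := hcon
    set B : Set ℝ := {s | s ∈ Set.Icc (0:ℝ) 1 ∧ f 0 < f s} with hBdef
    have hBne : B.Nonempty := ⟨s₀, hs₀, hfs₀⟩
    have hbdd : BddBelow B := ⟨0, fun x hx => hx.1.1⟩
    set m := sInf B with hmdef
    have hm0 : 0 ≤ m := le_csInf hBne (fun x hx => hx.1.1)
    have hm1 : m ≤ 1 := by
      obtain ⟨b, hb'⟩ := hBne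
      exact (csInf_le hbdd hb').trans hb'.1.2
    have good : ∀ u, 0 ≤ u → u < m → f u ≤ f 0 := by
      intro u hu0 hum
      by_contra hgt
      push_neg at hgt
      have : u ∈ B := ⟨⟨hu0, hum.le.trans hm1⟩, hgt⟩
      exact absurd (csInf_le hbdd this) (not_le.2 hum)
    have hfm : f m ≤ f 0 := by
      rcases eq_or_lt_of_le hm0 with h | h
      · rw [← h]
      · have htd : Tendsto f (𝓝[<] m) (𝓝 (f m)) :=
          (hd1 m).continuousAt.continuousWithinAt
        refine le_of_tendsto htd ?_
        filter_upwards [Ioo_mem_nhdsLT_of_mem (⟨h, le_rfl⟩ : m ∈ Set.Ioc 0 m)]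
          with u hu
        exact good u hu.1.le hu.2
    have goodm : ∀ u ∈ Set.Icc (0:ℝ) m, f u ≤ f 0 := by
      intro u hu
      rcases lt_or_eq_of_le hu.2 with h | h
      · exact good u hu.1 h
      · rw [h]; exact hfm
    have hm_notB : m ∉ B := fun h => absurd h.2 (not_lt.2 hfm)
    have hmlt1 : m < 1 := by
      rcases lt_or_eq_of_le hm1 with h | h
      · exact h
      · exfalso
        obtain ⟨b, hb'⟩ := hBne
        have h1 : m ≤ b := csInf_le hbdd hb'
        have : b = m := le_antisymm (h ▸ hb'.1.2) h1
        exact hm_notB (this ▸ hb')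
    have hf'm : f' m < 0 := by
      have := helper m ⟨hm0, hm1⟩ goodm m ⟨hm0, le_rfl⟩
      nlinarith
    have hslope : Tendsto (slope f m) (𝓝[>] m) (𝓝 (f' m)) :=
      (hasDerivAt_iff_tendsto_slope.mp (hd1 m)).mono_left
        (nhdsWithin_mono _ (fun x hx => ne_of_gt hx))
    have hev : ∀ᶠ x in 𝓝[>] m, f x < f m := by
      filter_upwards [Filter.Tendsto.eventually_lt_const hf'm hslope,
        self_mem_nhdsWithin] with x hx hx'
      have hxm : m < x := hx'
      rw [slope_def_field] at hx
      have h := mul_neg_of_neg_of_pos hx (sub_pos.2 hxm)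
      rw [div_mul_cancel₀ _ (sub_ne_zero.2 (ne_of_gt hxm))] at h
      linarith
    obtain ⟨u, hu, hsub⟩ := mem_nhdsGT_iff_exists_Ioo_subset.mp hev
    obtain ⟨b, hbB, hblt⟩ := exists_lt_of_csInf_lt hBne (show sInf B < u from hu)
    have hmb : m ≤ b := csInf_le hbdd hbB
    have hne : m ≠ b := fun h => hm_notB (h ▸ hbB)
    have hfb : f b < f m := hsub ⟨lt_of_le_of_ne hmb hne, hblt⟩
    have := hbB.2
    linarith
  -- Step 2
  have hf'le : ∀ u ∈ Set.Icc (0:ℝ) 1, f' u ≤ f' 0 + K * f 0 * u := by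
    intro u hu
    have := aux_antitone (fun u => f' u - K * f 0 * u) (fun u => f'' u - K * f 0)
      (fun u => (hd2 u).sub (by simpa using (hasDerivAt_id u).const_mul (K * f 0))) 1 zero_le_one
      (fun v hv => by
        have h1 : f'' v ≤ K * f v := hb v ⟨hv.1.le, hv.2.le⟩
        have h2 : K * f v ≤ K * f 0 := mul_le_mul_of_nonneg_left
          (hA v ⟨hv.1.le, hv.2.le⟩) hK
        show f'' v - K * f 0 ≤ 0
        linarith) u hu
    simp only [mul_zero, sub_zero] at this
    linarith [this]
  have := aux_antitone (fun u => f u - (f 0 + f' 0 * u + K * f 0 * u ^ 2 / 2))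
    (fun u => f' u - (f' 0 + K * f 0 * u))
    (fun u => by
      have h1 : HasDerivAt (fun u : ℝ => f 0 + f' 0 * u + K * f 0 * u ^ 2 / 2)
          (f' 0 + K * f 0 * u) u := by
        have h2 := (((hasDerivAt_id u).const_mul (f' 0)).const_add (f 0)).fun_add
          (((hasDerivAt_pow 2 u)).const_mul (K * f 0) |>.div_const 2)
        simp only [id_eq] at h2
        refine h2.congr_deriv ?_
        push_cast
        ring
      exact (hd1 u).sub h1) 1 zero_le_one
    (fun v hv => sub_nonpos.2 (hf'le v ⟨hv.1.le, hv.2.le⟩))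
    1 (right_mem_Icc.2 zero_le_one)
  norm_num at this
  linarith [this]

lemma aux_gradient {n d : ℕ} (A : Fin n → EuclideanSpace ℝ (Fin d))
    (ℓ : ℝ → ℝ) (hdiff : Differentiable ℝ ℓ)
    (R : EuclideanSpace ℝ (Fin d) → ℝ)
    (hR : ∀ w, R w = (1 / (n : ℝ)) * ∑ i, ℓ ⟪A i, w⟫)
    (w : EuclideanSpace ℝ (Fin d)) :
    HasGradientAt R ((1 / (n : ℝ)) • ∑ i, deriv ℓ ⟪A i, w⟫ • A i) w := by
  set L : EuclideanSpace ℝ (Fin d) →L[ℝ] ℝ :=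
    (1 / (n : ℝ)) • ∑ i, deriv ℓ ⟪A i, w⟫ • (innerSL ℝ (A i)) with hL
  have hfd : HasFDerivAt R L w := by
    have hRe : R = fun v => (1 / (n : ℝ)) * ∑ i, ℓ ⟪A i, v⟫ := funext hR
    rw [hRe]
    have hsum : HasFDerivAt (fun v : EuclideanSpace ℝ (Fin d) => ∑ i, ℓ ⟪A i, v⟫)
        (∑ i, deriv ℓ ⟪A i, w⟫ • (innerSL ℝ (A i))) w := by
      refine HasFDerivAt.fun_sum (fun i _ => ?_)
      exact (hdiff _).hasDerivAt.comp_hasFDerivAt w ((innerSL ℝ (A i)).hasFDerivAt)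
    exact hsum.const_mul _
  have hiff := hasFDerivAt_iff_hasGradientAt.mp hfd
  have heq : ((InnerProductSpace.toDual ℝ (EuclideanSpace ℝ (Fin d))).symm L : EuclideanSpace ℝ (Fin d))
      = (1 / (n : ℝ)) • ∑ i, deriv ℓ ⟪A i, w⟫ • A i := by
    apply (InnerProductSpace.toDual ℝ (EuclideanSpace ℝ (Fin d))).injective
    rw [LinearIsometryEquiv.apply_symm_apply]
    ext v
    simp only [InnerProductSpace.toDual_apply_apply, hL, ContinuousLinearMap.smul_apply,
      ContinuousLinearMap.coe_sum', Finset.sum_apply, ContinuousLinearMap.coe_smul',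
      Pi.smul_apply, innerSL_apply_apply, smul_eq_mul]
    rw [real_inner_smul_left, sum_inner]
    congr 1
    refine Finset.sum_congr rfl (fun i _ => ?_)
    rw [real_inner_smul_left]
  rwa [heq] at hiff

lemma aux_step {n d : ℕ} (hn : 0 < n)
    (A : Fin n → EuclideanSpace ℝ (Fin d)) (hA : ∀ i, ‖A i‖ ≤ 1)
    (ℓ : ℝ → ℝ) (hconv : ConvexOn ℝ Set.univ ℓ) (hC2 : ContDiff ℝ 2 ℓ)
    (hℓ' : ∀ z, deriv ℓ z ≤ ℓ z) (hℓ'' : ∀ z, deriv (deriv ℓ) z ≤ ℓ z)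
    (R : EuclideanSpace ℝ (Fin d) → ℝ)
    (hR : ∀ w, R w = (1 / (n : ℝ)) * ∑ i, ℓ ⟪A i, w⟫)
    (ηj : ℝ) (hηj : 0 < ηj) (x : EuclideanSpace ℝ (Fin d))
    (hstep : ηj * R x ≤ 1) :
    R (x - ηj • gradient R x) ≤
      R x * Real.exp (-(ηj * R x * (1 - ηj * R x / 2) * (‖gradient R x‖ / R x) ^ 2)) ∧
    ‖(x - ηj • gradient R x) - x‖ = (ηj * R x) * (‖gradient R x‖ / R x) := by
  have hdiff : Differentiable ℝ ℓ := hC2.differentiable (by norm_num)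
  have hd2diff : Differentiable ℝ (deriv ℓ) := aux_deriv_ell_contdiff ℓ hC2
  have hℓnn : ∀ z, 0 ≤ ℓ z := fun z => le_trans (aux_deriv2_nonneg ℓ hconv hC2 z) (hℓ'' z)
  have hRnn : ∀ v, 0 ≤ R v := by
    intro v
    rw [hR v]
    have : 0 ≤ ∑ i, ℓ ⟪A i, v⟫ := Finset.sum_nonneg (fun i _ => hℓnn _)
    positivity
  have hgrad : gradient R x = (1 / (n : ℝ)) • ∑ i, deriv ℓ ⟪A i, x⟫ • A i :=
    (aux_gradient A ℓ hdiff R hR x).gradient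
  rcases eq_or_lt_of_le (hRnn x) with hρ0 | hρpos
  · -- R x = 0
    have hsum0 : ∑ i, ℓ ⟪A i, x⟫ = 0 := by
      have h := hρ0.symm
      rw [hR x] at h
      have hn' : (0:ℝ) < (n : ℝ) := by exact_mod_cast hn
      field_simp at h
      simpa using h
    have hterm0 : ∀ i ∈ Finset.univ, ℓ ⟪A i, x⟫ = 0 := by
      rw [← Finset.sum_eq_zero_iff_of_nonneg (fun i _ => hℓnn _)]
      exact hsum0
    have hderiv0 : ∀ i : Fin n, deriv ℓ ⟪A i, x⟫ = 0 := by
      intro i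
      have hmin : IsLocalMin ℓ ⟪A i, x⟫ := Filter.Eventually.of_forall (fun z => by
        rw [hterm0 i (Finset.mem_univ i)]; exact hℓnn z)
      exact hmin.deriv_eq_zero
    have hg0 : gradient R x = 0 := by
      rw [hgrad]
      have hz : ∑ i, deriv ℓ ⟪A i, x⟫ • A i = (0 : EuclideanSpace ℝ (Fin d)) :=
        Finset.sum_eq_zero (fun i _ => by rw [hderiv0 i, zero_smul])
      rw [hz, smul_zero]
    rw [hg0]
    simp only [smul_zero, sub_zero, norm_zero, sub_self]
    rw [← hρ0]
    norm_num
  · -- R x > 0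
    rcases eq_or_ne (gradient R x) 0 with hg0 | hgne
    · rw [hg0]
      simp only [smul_zero, sub_zero, norm_zero, sub_self]
      constructor
      · rw [zero_div]
        norm_num
      · simp
    · -- main case
      set δ : EuclideanSpace ℝ (Fin d) := -(ηj • gradient R x) with hδ
      have hx' : x - ηj • gradient R x = x + δ := by rw [hδ, sub_eq_add_neg]
      set b : Fin n → ℝ := fun i => ⟪A i, x⟫ with hb
      set c : Fin n → ℝ := fun i => ⟪A i, δ⟫ with hc
      have hfr : ∀ s : ℝ, R (x + s • δ) = (1 / (n : ℝ)) * ∑ i, ℓ (b i + s * c i) := by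
        intro s
        rw [hR]
        congr 1
        refine Finset.sum_congr rfl (fun i _ => ?_)
        rw [inner_add_right, real_inner_smul_right]
      have hlin : ∀ i (s : ℝ), HasDerivAt (fun s : ℝ => b i + s * c i) (c i) s :=
        fun i s => (hasDerivAt_mul_const (c i)).const_add (b i)
      have hd1 : ∀ s : ℝ, HasDerivAt (fun s => (1 / (n : ℝ)) * ∑ i, ℓ (b i + s * c i))
          ((1 / (n : ℝ)) * ∑ i, deriv ℓ (b i + s * c i) * c i) s := by
        intro s
        refine HasDerivAt.const_mul _ (HasDerivAt.fun_sum (fun i _ => ?_))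
        exact ((hdiff _).hasDerivAt.comp s (hlin i s))
      have hd2 : ∀ s : ℝ, HasDerivAt
          (fun s => (1 / (n : ℝ)) * ∑ i, deriv ℓ (b i + s * c i) * c i)
          ((1 / (n : ℝ)) * ∑ i, deriv (deriv ℓ) (b i + s * c i) * c i * c i) s := by
        intro s
        refine HasDerivAt.const_mul _ (HasDerivAt.fun_sum (fun i _ => ?_))
        exact ((hd2diff _).hasDerivAt.comp s (hlin i s)).mul_const (c i)
      have hcsq : ∀ i, c i * c i ≤ ‖δ‖ ^ 2 := by
        intro i
        have h1 : |c i| ≤ ‖δ‖ := by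
          refine (abs_real_inner_le_norm (A i) δ).trans ?_
          nlinarith [hA i, norm_nonneg δ, norm_nonneg (A i)]
        calc c i * c i = |c i| * |c i| := (abs_mul_abs_self _).symm
          _ ≤ ‖δ‖ * ‖δ‖ := mul_self_le_mul_self (abs_nonneg _) h1
          _ = ‖δ‖ ^ 2 := (sq ‖δ‖).symm
      have hbnd : ∀ s ∈ Set.Icc (0:ℝ) 1,
          (1 / (n : ℝ)) * ∑ i, deriv (deriv ℓ) (b i + s * c i) * c i * c i ≤
          ‖δ‖ ^ 2 * ((1 / (n : ℝ)) * ∑ i, ℓ (b i + s * c i)) := by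
        intro s _
        have hterm : ∀ i ∈ Finset.univ, deriv (deriv ℓ) (b i + s * c i) * c i * c i ≤
            ‖δ‖ ^ 2 * ℓ (b i + s * c i) := by
          intro i _
          have h1 : 0 ≤ deriv (deriv ℓ) (b i + s * c i) := aux_deriv2_nonneg ℓ hconv hC2 _
          have h2 : deriv (deriv ℓ) (b i + s * c i) ≤ ℓ (b i + s * c i) := hℓ'' _
          have h3 := hcsq i
          have h4 : 0 ≤ c i * c i := mul_self_nonneg _
          nlinarith [hℓnn (b i + s * c i)]
        calc (1 / (n : ℝ)) * ∑ i, deriv (deriv ℓ) (b i + s * c i) * c i * c i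
            ≤ (1 / (n : ℝ)) * ∑ i, ‖δ‖ ^ 2 * ℓ (b i + s * c i) := by
              refine mul_le_mul_of_nonneg_left (Finset.sum_le_sum hterm) (by positivity)
          _ = ‖δ‖ ^ 2 * ((1 / (n : ℝ)) * ∑ i, ℓ (b i + s * c i)) := by
              rw [← Finset.mul_sum]; ring
      have hf'0 : (1 / (n : ℝ)) * ∑ i, deriv ℓ (b i + 0 * c i) * c i
          = -(ηj * ‖gradient R x‖ ^ 2) := by
        have hip : ⟪gradient R x, δ⟫ = -(ηj * ‖gradient R x‖ ^ 2) := by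
          rw [hδ, inner_neg_right, real_inner_smul_right, real_inner_self_eq_norm_sq]
        rw [← hip]
        conv_rhs => rw [hgrad]
        rw [real_inner_smul_left, sum_inner]
        simp only [zero_mul, add_zero]
        congr 1
        refine Finset.sum_congr rfl (fun i _ => ?_)
        rw [real_inner_smul_left]
      have hKval : ‖δ‖ ^ 2 = ηj ^ 2 * ‖gradient R x‖ ^ 2 := by
        rw [hδ, norm_neg, norm_smul, Real.norm_eq_abs, abs_of_pos hηj, mul_pow]
      have hgn : 0 < ‖gradient R x‖ := norm_pos_iff.2 hgne
      have key : (1 / (n : ℝ)) * ∑ i, ℓ (b i + 1 * c i) ≤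
          (1 / (n : ℝ)) * ∑ i, ℓ (b i + 0 * c i)
          + (1 / (n : ℝ)) * ∑ i, deriv ℓ (b i + 0 * c i) * c i
          + ‖δ‖ ^ 2 * ((1 / (n : ℝ)) * ∑ i, ℓ (b i + 0 * c i)) / 2 := by
        refine aux_key _ _ _ hd1 hd2 (‖δ‖ ^ 2) (by positivity) hbnd ?_ ?_
        · show (1 / (n : ℝ)) * ∑ i, deriv ℓ (b i + 0 * c i) * c i < 0
          rw [hf'0]
          have : 0 < ηj * ‖gradient R x‖ ^ 2 := by positivity
          linarith
        · show ‖δ‖ ^ 2 * ((1 / (n : ℝ)) * ∑ i, ℓ (b i + 0 * c i)) ≤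
            -((1 / (n : ℝ)) * ∑ i, deriv ℓ (b i + 0 * c i) * c i)
          rw [hf'0, ← hfr 0, hKval]
          simp only [zero_smul, add_zero]
          nlinarith [hρpos, hgn, hηj, hstep]
      rw [← hfr 1, ← hfr 0, hf'0] at key
      simp only [one_smul, zero_smul, add_zero] at key
      constructor
      · rw [hx']
        have hρne : R x ≠ 0 := ne_of_gt hρpos
        have hXeq : R x * (1 - ηj * R x * (1 - ηj * R x / 2) * (‖gradient R x‖ / R x) ^ 2) =
            R x - ηj * ‖gradient R x‖ ^ 2 + ηj ^ 2 * ‖gradient R x‖ ^ 2 * R x / 2 := by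
          field_simp
          ring
        have hexp : 1 - ηj * R x * (1 - ηj * R x / 2) * (‖gradient R x‖ / R x) ^ 2 ≤
            Real.exp (-(ηj * R x * (1 - ηj * R x / 2) * (‖gradient R x‖ / R x) ^ 2)) := by
          have := Real.add_one_le_exp
            (-(ηj * R x * (1 - ηj * R x / 2) * (‖gradient R x‖ / R x) ^ 2))
          linarith
        have hmul := mul_le_mul_of_nonneg_left hexp (le_of_lt hρpos)
        have hK2 : ‖δ‖ ^ 2 * R x / 2 = ηj ^ 2 * ‖gradient R x‖ ^ 2 * R x / 2 := by
          rw [hKval]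
        calc R (x + δ) ≤ R x + -(ηj * ‖gradient R x‖ ^ 2) + ‖δ‖ ^ 2 * R x / 2 := key
          _ = R x - ηj * ‖gradient R x‖ ^ 2 + ηj ^ 2 * ‖gradient R x‖ ^ 2 * R x / 2 := by
              rw [hK2]; ring
          _ = R x * (1 - ηj * R x * (1 - ηj * R x / 2) * (‖gradient R x‖ / R x) ^ 2) :=
              hXeq.symm
          _ ≤ R x * Real.exp (-(ηj * R x * (1 - ηj * R x / 2) *
              (‖gradient R x‖ / R x) ^ 2)) := hmul
      · rw [sub_sub_cancel_left, norm_neg, norm_smul, Real.norm_eq_abs, abs_of_pos hηj]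
        have hρne : R x ≠ 0 := ne_of_gt hρpos
        field_simp


/-- Gradient descent iterates with normalized step sizes `ĥ_j = η_j R(w_j) ≤ 1` satisfy
`R(w_t) ≤ R(w_0) exp(−Σ_{j<t} ĥ_j(1 − ĥ_j/2)γ_j²)` where `γ_j = |∇R(w_j)|/R(w_j)`,
and `|w_t − w_0| ≤ Σ_{j<t} ĥ_j γ_j`. -/
theorem risk_multiplicative_decrease {n d : ℕ} (hn : 0 < n)
    (A : Fin n → EuclideanSpace ℝ (Fin d)) (hA : ∀ i, ‖A i‖ ≤ 1)
    (ℓ : ℝ → ℝ) (hconv : ConvexOn ℝ Set.univ ℓ) (hC2 : ContDiff ℝ 2 ℓ)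
    (hℓ' : ∀ z, deriv ℓ z ≤ ℓ z) (hℓ'' : ∀ z, deriv (deriv ℓ) z ≤ ℓ z)
    (R : EuclideanSpace ℝ (Fin d) → ℝ)
    (hR : ∀ w, R w = (1 / (n : ℝ)) * ∑ i, ℓ ⟪A i, w⟫)
    (η : ℕ → ℝ) (hη : ∀ j, 0 < η j) (w : ℕ → EuclideanSpace ℝ (Fin d))
    (hiter : ∀ j, w (j + 1) = w j - η j • gradient R (w j))
    (hstep : ∀ j, η j * R (w j) ≤ 1) (t : ℕ) :
    R (w t) ≤ R (w 0) *
        Real.exp (-∑ j ∈ Finset.range t,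
          (η j * R (w j)) * (1 - (η j * R (w j)) / 2) * (‖gradient R (w j)‖ / R (w j)) ^ 2) ∧
    ‖w t - w 0‖ ≤ ∑ j ∈ Finset.range t, (η j * R (w j)) * (‖gradient R (w j)‖ / R (w j)) := by
  have hstepj : ∀ j, R (w (j+1)) ≤ R (w j) *
      Real.exp (-(η j * R (w j) * (1 - η j * R (w j) / 2) *
        (‖gradient R (w j)‖ / R (w j)) ^ 2)) ∧
      ‖w (j+1) - w j‖ = (η j * R (w j)) * (‖gradient R (w j)‖ / R (w j)) := by
    intro j
    rw [hiter j]
    exact aux_step hn A hA ℓ hconv hC2 hℓ' hℓ'' R hR (η j) (hη j) (w j) (hstep j)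
  constructor
  · induction t with
    | zero => simp
    | succ t ih =>
      rw [Finset.sum_range_succ, neg_add, Real.exp_add, ← mul_assoc]
      calc R (w (t+1)) ≤ R (w t) * Real.exp (-(η t * R (w t) * (1 - η t * R (w t) / 2) *
            (‖gradient R (w t)‖ / R (w t)) ^ 2)) := (hstepj t).1
        _ ≤ (R (w 0) * Real.exp (-∑ j ∈ Finset.range t,
              (η j * R (w j)) * (1 - (η j * R (w j)) / 2) *
              (‖gradient R (w j)‖ / R (w j)) ^ 2)) *
            Real.exp (-(η t * R (w t) * (1 - η t * R (w t) / 2) *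
              (‖gradient R (w t)‖ / R (w t)) ^ 2)) :=
          mul_le_mul_of_nonneg_right ih (Real.exp_pos _).le
  · induction t with
    | zero => simp
    | succ t ih =>
      rw [Finset.sum_range_succ]
      calc ‖w (t+1) - w 0‖ ≤ ‖w (t+1) - w t‖ + ‖w t - w 0‖ := by
            have := dist_triangle (w (t+1)) (w t) (w 0)
            simpa [dist_eq_norm] using this
        _ ≤ (η t * R (w t)) * (‖gradient R (w t)‖ / R (w t)) +
            ∑ j ∈ Finset.range t, (η j * R (w j)) * (‖gradient R (w j)‖ / R (w j)) := by
            rw [(hstepj t).2]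
            linarith [ih]
        _ = _ := by ring
end

section
/- Let A_⊥ ∈ ℝ^{m×d} with m > 0 rows and suppose there exists u with A_⊥ u < 0 coordinatewise. Then the optimization problem min{ max_i (A_⊥ u)_i : |u| = 1 } has a unique optimizer ū, and every optimizer q̄ of min{ |A_⊥^T q| : q ≥ 0, Σ q_i = 1 } satisfies ū = −A_⊥^T q̄ / γ, where γ is the common optimal value of the margin problem (negated). -/
open scoped RealInnerProductSpace

/-- The maximum margin problem `min{max_i ⟨A⊥_i, u⟩ : |u| = 1}` has a unique optimizer `ubar`,
and every dual optimizer `qbar` (minimizer of `|A⊥ᵀ q|` over the simplex) satisfies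
`ubar = −A⊥ᵀ qbar / γ`, where `−γ` is the optimal margin value. -/
theorem max_margin_unique_and_dual_representation {m d : ℕ} (hm : 0 < m)
    (A : Fin m → EuclideanSpace ℝ (Fin d))
    (hsep : ∃ u, ∀ i, ⟪A i, u⟫ < 0) (γ : ℝ)
    (hγ : γ = -sInf {r : ℝ | ∃ u : EuclideanSpace ℝ (Fin d), ‖u‖ = 1 ∧
        r = Finset.univ.sup' ⟨⟨0, hm⟩, Finset.mem_univ _⟩ fun i => ⟪A i, u⟫}) :
    ∃ ubar : EuclideanSpace ℝ (Fin d),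
      (‖ubar‖ = 1 ∧ (Finset.univ.sup' ⟨⟨0, hm⟩, Finset.mem_univ _⟩ fun i => ⟪A i, ubar⟫) = -γ) ∧
      (∀ u : EuclideanSpace ℝ (Fin d), ‖u‖ = 1 →
        (Finset.univ.sup' ⟨⟨0, hm⟩, Finset.mem_univ _⟩ fun i => ⟪A i, u⟫) = -γ → u = ubar) ∧
      (∀ qbar : Fin m → ℝ, (∀ i, 0 ≤ qbar i) → (∑ i, qbar i) = 1 → ‖∑ i, qbar i • A i‖ = γ →
        ubar = -(γ⁻¹ • ∑ i, qbar i • A i)) := by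
  have ne : (Finset.univ : Finset (Fin m)).Nonempty := ⟨⟨0, hm⟩, Finset.mem_univ _⟩
  set f : EuclideanSpace ℝ (Fin d) → ℝ :=
    fun u => Finset.univ.sup' ne fun i => ⟪A i, u⟫ with hf
  have hfcont : Continuous f :=
    Continuous.finset_sup'_apply ne fun i _ => continuous_const.inner continuous_id
  -- subadditivity
  have hsub : ∀ u v, f (u + v) ≤ f u + f v := by
    intro u v
    apply Finset.sup'_le
    intro i _
    rw [inner_add_right]
    exact add_le_add (Finset.le_sup' (fun j => (⟪A j, u⟫ : ℝ)) (Finset.mem_univ i))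
      (Finset.le_sup' (fun j => (⟪A j, v⟫ : ℝ)) (Finset.mem_univ i))
  -- positive homogeneity
  have hsmul : ∀ (c : ℝ) u, 0 ≤ c → f (c • u) = c * f u := by
    intro c u hc
    have : (fun i => ⟪A i, c • u⟫) = fun i => c * ⟪A i, u⟫ :=
      funext fun i => real_inner_smul_right _ _ _
    rw [hf]
    simp only [this]
    exact (Finset.comp_sup'_eq_sup'_comp ne (fun x : ℝ => c * x)
      (fun x y => mul_max_of_nonneg x y hc)).symm
  -- a unit vector with negative value
  obtain ⟨u0, hu0⟩ := hsep
  have hu0ne : u0 ≠ 0 := by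
    intro h
    have := hu0 ⟨0, hm⟩
    rw [h, inner_zero_right] at this
    exact lt_irrefl 0 this
  have hn0 : (0 : ℝ) < ‖u0‖ := norm_pos_iff.2 hu0ne
  set v0 : EuclideanSpace ℝ (Fin d) := ‖u0‖⁻¹ • u0 with hv0
  have hv0norm : ‖v0‖ = 1 := by
    rw [hv0, norm_smul, norm_inv, norm_norm, inv_mul_cancel₀ hn0.ne']
  have hfv0 : f v0 < 0 := by
    rw [hv0, hsmul _ _ (inv_nonneg.2 hn0.le)]
    have hfu0 : f u0 < 0 := Finset.sup'_lt_iff ne |>.2 fun i _ => hu0 i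
    exact mul_neg_of_pos_of_neg (inv_pos.2 hn0) hfu0
  -- the feasible value set
  set S : Set ℝ := {r : ℝ | ∃ u : EuclideanSpace ℝ (Fin d), ‖u‖ = 1 ∧
      r = Finset.univ.sup' ⟨⟨0, hm⟩, Finset.mem_univ _⟩ fun i => ⟪A i, u⟫} with hS
  have hSmem : ∀ u : EuclideanSpace ℝ (Fin d), ‖u‖ = 1 → f u ∈ S := fun u hu => ⟨u, hu, rfl⟩
  have hSne : S.Nonempty := ⟨f v0, hSmem v0 hv0norm⟩
  have hSbdd : BddBelow S := by
    refine ⟨-(∑ i, ‖A i‖), ?_⟩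
    rintro r ⟨u, hu, rfl⟩
    have h1 : -‖A ⟨0, hm⟩‖ ≤ ⟪A ⟨0, hm⟩, u⟫ := by
      have := abs_real_inner_le_norm (A ⟨0, hm⟩) u
      rw [hu, mul_one] at this
      linarith [neg_abs_le (⟪A ⟨0, hm⟩, u⟫ : ℝ)]
    have h2 : ‖A ⟨0, hm⟩‖ ≤ ∑ i, ‖A i‖ :=
      Finset.single_le_sum (fun i _ => norm_nonneg (A i)) (Finset.mem_univ _)
    calc -(∑ i, ‖A i‖) ≤ -‖A ⟨0, hm⟩‖ := by linarith
      _ ≤ ⟪A ⟨0, hm⟩, u⟫ := h1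
      _ ≤ _ := Finset.le_sup' (fun j => (⟪A j, u⟫ : ℝ)) (Finset.mem_univ (⟨0, hm⟩ : Fin m))
  -- attainment on the compact sphere
  have hcompact : IsCompact (Metric.sphere (0 : EuclideanSpace ℝ (Fin d)) 1) :=
    isCompact_sphere 0 1
  have hsphne : (Metric.sphere (0 : EuclideanSpace ℝ (Fin d)) 1).Nonempty :=
    ⟨v0, by simpa [mem_sphere_zero_iff_norm] using hv0norm⟩
  obtain ⟨ubar, hubmem, hubmin⟩ :=
    hcompact.exists_isMinOn hsphne (hfcont.continuousOn)
  have hubnorm : ‖ubar‖ = 1 := mem_sphere_zero_iff_norm.1 hubmem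
  have hmin : ∀ u : EuclideanSpace ℝ (Fin d), ‖u‖ = 1 → f ubar ≤ f u := by
    intro u hu
    exact hubmin (mem_sphere_zero_iff_norm.2 hu)
  have hsInf : sInf S = f ubar := by
    apply le_antisymm (csInf_le hSbdd (hSmem ubar hubnorm))
    apply le_csInf hSne
    rintro r ⟨u, hu, rfl⟩
    exact hmin u hu
  have hfubar : f ubar = -γ := by rw [hγ, hsInf, neg_neg]
  have hγpos : 0 < γ := by
    have := hmin v0 hv0norm
    rw [hfubar] at this
    linarith
  -- lower bound for all unit vectors
  have hlb : ∀ u : EuclideanSpace ℝ (Fin d), ‖u‖ = 1 → -γ ≤ f u := by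
    intro u hu; rw [← hfubar]; exact hmin u hu
  -- uniqueness
  have huniq : ∀ u : EuclideanSpace ℝ (Fin d), ‖u‖ = 1 → f u = -γ → u = ubar := by
    intro u hu hfu
    by_contra hne'
    have hsumne : u + ubar ≠ 0 := by
      intro h
      have h1 : ⟪A ⟨0, hm⟩, u⟫ ≤ f u :=
        Finset.le_sup' (fun j => (⟪A j, u⟫ : ℝ)) (Finset.mem_univ (⟨0, hm⟩ : Fin m))
      have h2 : ⟪A ⟨0, hm⟩, ubar⟫ ≤ f ubar :=
        Finset.le_sup' (fun j => (⟪A j, ubar⟫ : ℝ)) (Finset.mem_univ (⟨0, hm⟩ : Fin m))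
      have h3 : ⟪A ⟨0, hm⟩, u⟫ + ⟪A ⟨0, hm⟩, ubar⟫ = 0 := by
        rw [← inner_add_right, h, inner_zero_right]
      rw [hfu] at h1; rw [hfubar] at h2
      linarith
    have hspos : (0 : ℝ) < ‖u + ubar‖ := norm_pos_iff.2 hsumne
    have hinnerlt : ⟪u, ubar⟫ < 1 := by
      rcases lt_or_eq_of_le (real_inner_le_norm u ubar) with h | h
      · rwa [hu, hubnorm, mul_one] at h
      · exfalso
        apply hne'
        have := inner_eq_norm_mul_iff_real.1 h
        rwa [hu, hubnorm, one_smul, one_smul] at this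
    have hslt : ‖u + ubar‖ < 2 := by
      have hsq : ‖u + ubar‖ ^ 2 = 2 + 2 * ⟪u, ubar⟫ := by
        rw [norm_add_sq_real, hu, hubnorm]; ring
      nlinarith [hspos]
    set w : EuclideanSpace ℝ (Fin d) := ‖u + ubar‖⁻¹ • (u + ubar) with hw
    have hwnorm : ‖w‖ = 1 := by
      rw [hw, norm_smul, norm_inv, norm_norm, inv_mul_cancel₀ hspos.ne']
    have hfw : f w ≤ ‖u + ubar‖⁻¹ * (-2 * γ) := by
      rw [hw, hsmul _ _ (inv_nonneg.2 hspos.le)]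
      have := hsub u ubar
      rw [hfu, hfubar] at this
      have h2 : f (u + ubar) ≤ -2 * γ := by linarith
      exact mul_le_mul_of_nonneg_left h2 (inv_nonneg.2 hspos.le)
    have hcontra : ‖u + ubar‖⁻¹ * (-2 * γ) < -γ := by
      rw [inv_mul_lt_iff₀ hspos]
      nlinarith
    have := hlb w hwnorm
    linarith
  refine ⟨ubar, ⟨hubnorm, hfubar⟩, huniq, ?_⟩
  -- dual representation
  intro qbar hq hsum hnorm
  set g : EuclideanSpace ℝ (Fin d) := ∑ i, qbar i • A i with hg
  have hig : ⟪g, ubar⟫ = ∑ i, qbar i * ⟪A i, ubar⟫ := by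
    rw [hg, sum_inner]
    exact Finset.sum_congr rfl fun i _ => real_inner_smul_left _ _ _
  have h1 : ⟪g, ubar⟫ ≤ -γ := by
    rw [hig]
    calc ∑ i, qbar i * ⟪A i, ubar⟫ ≤ ∑ i, qbar i * (-γ) := by
          apply Finset.sum_le_sum
          intro i _
          apply mul_le_mul_of_nonneg_left _ (hq i)
          rw [← hfubar]
          exact Finset.le_sup' (fun j => (⟪A j, ubar⟫ : ℝ)) (Finset.mem_univ i)
      _ = -γ := by rw [← Finset.sum_mul, hsum, one_mul]
  have h2 : -γ ≤ ⟪g, ubar⟫ := by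
    have := abs_real_inner_le_norm g ubar
    rw [hnorm, hubnorm, mul_one] at this
    linarith [neg_abs_le (⟪g, ubar⟫ : ℝ)]
  have heq : ⟪-g, ubar⟫ = ‖-g‖ * ‖ubar‖ := by
    rw [inner_neg_left, norm_neg, hnorm, hubnorm, mul_one]
    linarith
  have := inner_eq_norm_mul_iff_real.1 heq
  rw [hubnorm, norm_neg, hnorm, one_smul] at this
  -- this : -g = γ • ubar
  have : ubar = γ⁻¹ • (-g) := by
    rw [this, smul_smul, inv_mul_cancel₀ hγpos.ne', one_smul]
  rw [this, smul_neg]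
end

section
/- Let A ∈ ℝ^{n×d}. Partition the rows of A by placing row i into A_c if there exists u_i with A u_i ≤ 0 coordinatewise and (A u_i)_i < 0, and otherwise into A_S. Let S = span of the rows of A_S. Then there exists ũ ∈ S^⊥ with A_c ũ < 0 coordinatewise and A_S ũ = 0; in particular, the projections of the rows of A_c onto S^⊥ form a linearly separable set. -/
open scoped RealInnerProductSpace

/-- Row `i` of the data belongs to the separable part iff some vector weakly separates all rows
while strictly separating row `i`. -/
def IsSepRow {n d : ℕ} (A : Fin n → EuclideanSpace ℝ (Fin d)) (i : Fin n) : Prop :=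
  ∃ u : EuclideanSpace ℝ (Fin d), (∀ j, ⟪A j, u⟫ ≤ 0) ∧ ⟪A i, u⟫ < 0

/-- With `S` the span of the non-separable rows, there is `ũ ∈ S^⊥` strictly separating every
separable row and orthogonal to every non-separable row; in particular the projections of the
separable rows onto `S^⊥` are linearly separable. -/
theorem exists_separator_in_orthogonal_complement {n d : ℕ}
    (A : Fin n → EuclideanSpace ℝ (Fin d)) :
    ∃ utilde ∈ (Submodule.span ℝ {x | ∃ i, ¬ IsSepRow A i ∧ A i = x})ᗮ,
      (∀ i, IsSepRow A i → ⟪A i, utilde⟫ < 0) ∧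
      (∀ i, ¬ IsSepRow A i → ⟪A i, utilde⟫ = 0) := by
  classical
  choose f hf using fun i (h : IsSepRow A i) => h
  set u : EuclideanSpace ℝ (Fin d) := ∑ i, if h : IsSepRow A i then f i h else 0 with hu
  have hle : ∀ j, ⟪A j, u⟫ ≤ 0 := by
    intro j
    rw [hu, inner_sum]
    apply Finset.sum_nonpos
    intro i _
    by_cases h : IsSepRow A i
    · simpa only [dif_pos h] using (hf i h).1 j
    · simp [dif_neg h]
  have hlt : ∀ i, IsSepRow A i → ⟪A i, u⟫ < 0 := by
    intro i hi
    rw [hu, inner_sum]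
    have : (∑ j : Fin n, ⟪A i, if h : IsSepRow A j then f j h else 0⟫) <
        ∑ _j : Fin n, (0 : ℝ) := by
      apply Finset.sum_lt_sum
      · intro k _
        by_cases h : IsSepRow A k
        · simpa only [dif_pos h] using (hf k h).1 i
        · simp [dif_neg h]
      · exact ⟨i, Finset.mem_univ i, by simpa only [dif_pos hi] using (hf i hi).2⟩
    simpa using this
  have hzero : ∀ i, ¬ IsSepRow A i → ⟪A i, u⟫ = 0 := by
    intro i hi
    rcases lt_or_eq_of_le (hle i) with h | h
    · exact absurd ⟨u, hle, h⟩ hi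
    · exact h
  refine ⟨u, ?_, hlt, hzero⟩
  rw [Submodule.mem_orthogonal]
  intro x hx
  induction hx using Submodule.span_induction with
  | mem x hx => obtain ⟨i, hi, rfl⟩ := hx; exact hzero i hi
  | zero => simp
  | add x y _ _ hx hy => rw [inner_add_left, hx, hy]; ring
  | smul c x _ hx => rw [real_inner_smul_left, hx]; ring
end

section
/- With the partition (A_S, A_c) and S = span(A_S^T) as above, every nonzero v ∈ S has a row a of A_S with ⟨a, v⟩ > 0. -/
open scoped RealInnerProductSpace

/-- Every nonzero `v` in the span `S` of the non-separable rows has positive inner product with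
some non-separable row. -/
theorem exists_row_pos_inner_of_mem_span {n d : ℕ}
    (A : Fin n → EuclideanSpace ℝ (Fin d))
    (v : EuclideanSpace ℝ (Fin d))
    (hv : v ∈ Submodule.span ℝ {x | ∃ i, ¬ IsSepRow A i ∧ A i = x}) (hv0 : v ≠ 0) :
    ∃ i, ¬ IsSepRow A i ∧ 0 < ⟪A i, v⟫ := by
  by_contra hcon
  push_neg at hcon
  have h : ∀ i, ¬ IsSepRow A i → ⟪A i, v⟫ ≤ 0 := hcon
  classical
  -- witnesses for separable rows
  set u : Fin n → EuclideanSpace ℝ (Fin d) :=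
    fun i => if hi : IsSepRow A i then hi.choose else 0 with hu
  have hu1 : ∀ j k, ⟪A k, u j⟫ ≤ 0 := by
    intro j k
    by_cases hj : IsSepRow A j
    · simp only [hu, dif_pos hj]
      exact hj.choose_spec.1 k
    · simp [hu, dif_neg hj]
  have hu2 : ∀ j, IsSepRow A j → ⟪A j, u j⟫ < 0 := by
    intro j hj
    simp only [hu, dif_pos hj]
    exact hj.choose_spec.2
  set U : EuclideanSpace ℝ (Fin d) := ∑ j, u j with hU
  have hUle : ∀ k, ⟪A k, U⟫ ≤ 0 := by
    intro k
    rw [hU, inner_sum]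
    exact Finset.sum_nonpos fun j _ => hu1 j k
  have hUlt : ∀ k, IsSepRow A k → ⟪A k, U⟫ < 0 := by
    intro k hk
    rw [hU, inner_sum]
    have : ∑ j : Fin n, ⟪A k, u j⟫ < ∑ j : Fin n, (0 : ℝ) :=
      Finset.sum_lt_sum (fun j _ => hu1 j k) ⟨k, Finset.mem_univ k, hu2 k hk⟩
    simpa using this
  -- a large enough scaling factor
  set t : ℝ := ∑ k, (if IsSepRow A k then max 0 (⟪A k, v⟫ / (-⟪A k, U⟫)) else 0) with ht
  have ht0 : 0 ≤ t := Finset.sum_nonneg fun k _ => by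
    split <;> positivity
  have htk : ∀ k, IsSepRow A k → ⟪A k, v⟫ / (-⟪A k, U⟫) ≤ t := by
    intro k hk
    calc ⟪A k, v⟫ / (-⟪A k, U⟫) ≤ max 0 (⟪A k, v⟫ / (-⟪A k, U⟫)) := le_max_right _ _
    _ = (if IsSepRow A k then max 0 (⟪A k, v⟫ / (-⟪A k, U⟫)) else 0) := by rw [if_pos hk]
    _ ≤ t := Finset.single_le_sum (f := fun k =>
        (if IsSepRow A k then max 0 (⟪A k, v⟫ / (-⟪A k, U⟫)) else 0))
        (fun j _ => by split <;> positivity) (Finset.mem_univ k)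
  set w : EuclideanSpace ℝ (Fin d) := v + t • U with hw
  have hwle : ∀ k, ⟪A k, w⟫ ≤ 0 := by
    intro k
    rw [hw, inner_add_right, real_inner_smul_right]
    by_cases hk : IsSepRow A k
    · have hneg : 0 < -⟪A k, U⟫ := by linarith [hUlt k hk]
      have := (div_le_iff₀ hneg).mp (htk k hk)
      nlinarith
    · have h1 := h k hk
      have h2 := hUle k
      nlinarith
  -- every non-separable row is orthogonal to v
  have horth : ∀ i, ¬ IsSepRow A i → ⟪A i, v⟫ = 0 := by
    intro i hi
    rcases lt_or_eq_of_le (h i hi) with hlt | he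
    · exact absurd ⟨w, hwle, by
        rw [hw, inner_add_right, real_inner_smul_right]
        nlinarith [hUle i]⟩ hi
    · exact he
  -- hence v ⟂ v
  have hvv : ⟪v, v⟫ = 0 := by
    have : ∀ x ∈ Submodule.span ℝ {x | ∃ i, ¬ IsSepRow A i ∧ A i = x}, ⟪x, v⟫ = (0 : ℝ) := by
      intro x hx
      induction hx using Submodule.span_induction with
      | mem x hx => obtain ⟨i, hi, rfl⟩ := hx; exact horth i hi
      | zero => simp
      | add x y _ _ hx hy => rw [inner_add_left, hx, hy]; ring
      | smul c x _ hx => rw [real_inner_smul_left, hx]; ring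
    exact this v hv
  exact hv0 (inner_self_eq_zero.mp hvv)
end

section
/- Let A ∈ ℝ^{n×d} with partition (A_S, A_c), S = span(A_S^T), and suppose ℓ ≥ 0 with lim_{z→−∞} ℓ(z) = 0. Let v̄ minimize v ↦ L(A_S v) over S and let ū ∈ S^⊥ be a unit vector with A_c ū < 0 coordinatewise. Then inf_{w ∈ ℝ^d} L(Aw) = L(A_S v̄), and lim_{r→∞} L(A(v̄ + r ū)) = L(A_S v̄). -/
open scoped RealInnerProductSpace Classical

/-- If `v̄` minimizes the loss over the non-separable part (over `S`) and `ū ∈ S^⊥` is a unit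
vector strictly separating the separable rows, then `inf_w L(Aw) = L(A_S v̄)` and the loss along
the ray `v̄ + r ū` tends to this infimum. -/
theorem optimal_ray_attains_infimum {n d : ℕ}
    (A : Fin n → EuclideanSpace ℝ (Fin d)) (ℓ : ℝ → ℝ)
    (hnn : ∀ z, 0 ≤ ℓ z) (hlim : Filter.Tendsto ℓ Filter.atBot (nhds 0))
    (F FS : EuclideanSpace ℝ (Fin d) → ℝ)
    (hF : ∀ w, F w = ∑ i, ℓ ⟪A i, w⟫)
    (hFS : ∀ w, FS w = ∑ i, if IsSepRow A i then 0 else ℓ ⟪A i, w⟫)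
    (vbar ubar : EuclideanSpace ℝ (Fin d))
    (hvbar : vbar ∈ Submodule.span ℝ {x | ∃ i, ¬ IsSepRow A i ∧ A i = x})
    (hvmin : ∀ v ∈ Submodule.span ℝ {x | ∃ i, ¬ IsSepRow A i ∧ A i = x}, FS vbar ≤ FS v)
    (hubar : ubar ∈ (Submodule.span ℝ {x | ∃ i, ¬ IsSepRow A i ∧ A i = x})ᗮ)
    (hunorm : ‖ubar‖ = 1)
    (hstrict : ∀ i, IsSepRow A i → ⟪A i, ubar⟫ < 0) :
    (⨅ w : EuclideanSpace ℝ (Fin d), F w) = FS vbar ∧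
    Filter.Tendsto (fun r : ℝ => F (vbar + r • ubar)) Filter.atTop (nhds (FS vbar)) := by
  set S := Submodule.span ℝ {x | ∃ i, ¬ IsSepRow A i ∧ A i = x} with hS
  have hmem : ∀ i, ¬ IsSepRow A i → A i ∈ S := fun i h => Submodule.subset_span ⟨i, h, rfl⟩
  -- inner product of non-separable rows with ubar is 0
  have hzero : ∀ i, ¬ IsSepRow A i → ⟪A i, ubar⟫ = 0 := fun i h =>
    (Submodule.mem_orthogonal S ubar).mp hubar _ (hmem i h)
  -- key lower bound
  have hlb : ∀ w, FS vbar ≤ F w := by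
    intro w
    have hPw : (S.orthogonalProjectionOnto w : EuclideanSpace ℝ (Fin d)) ∈ S :=
      (S.orthogonalProjectionOnto w).2
    have h1 : FS vbar ≤ FS w := by
      have heq : FS w = FS (S.orthogonalProjectionOnto w : EuclideanSpace ℝ (Fin d)) := by
        rw [hFS, hFS]
        refine Finset.sum_congr rfl fun i _ => ?_
        by_cases hi : IsSepRow A i
        · simp [hi]
        · have horth : ⟪A i, w - (S.orthogonalProjectionOnto w : EuclideanSpace ℝ (Fin d))⟫ = 0 :=
            (Submodule.mem_orthogonal S _).mp (S.sub_starProjection_mem_orthogonal w) _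
              (hmem i hi)
          rw [inner_sub_right] at horth
          simp [hi, sub_eq_zero.mp horth]
      rw [heq]
      exact hvmin _ hPw
    refine h1.trans ?_
    rw [hFS, hF]
    refine Finset.sum_le_sum fun i _ => ?_
    by_cases hi : IsSepRow A i
    · simp [hi, hnn]
    · simp [hi]
  -- the tendsto statement
  have htend : Filter.Tendsto (fun r : ℝ => F (vbar + r • ubar)) Filter.atTop (nhds (FS vbar)) := by
    rw [hFS]
    simp only [hF]
    refine tendsto_finset_sum _ fun i _ => ?_
    by_cases hi : IsSepRow A i
    · simp only [hi, if_true]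
      have harg : Filter.Tendsto (fun r : ℝ => ⟪A i, vbar + r • ubar⟫) Filter.atTop
          Filter.atBot := by
        simp only [inner_add_right, real_inner_smul_right]
        exact Filter.tendsto_atBot_add_const_left _ _
          ((Filter.tendsto_mul_const_atBot_of_neg (hstrict i hi)).mpr Filter.tendsto_id)
      exact hlim.comp harg
    · simp only [hi, if_false]
      have : ∀ r : ℝ, ⟪A i, vbar + r • ubar⟫ = ⟪A i, vbar⟫ := by
        intro r
        rw [inner_add_right, real_inner_smul_right, hzero i hi, mul_zero, add_zero]
      simp only [this]
      exact tendsto_const_nhds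
  refine ⟨le_antisymm ?_ (le_ciInf hlb), htend⟩
  have hbdd : BddBelow (Set.range F) := by
    refine ⟨0, fun x hx => ?_⟩
    obtain ⟨w, rfl⟩ := hx
    rw [hF]
    exact Finset.sum_nonneg fun i _ => hnn _
  exact ge_of_tendsto htend (Filter.Eventually.of_forall fun r => ciInf_le hbdd _)
end

section
/- For ℓ ∈ {logistic, exponential} with risk R(w) = (1/n)Σ_i ℓ(⟨A_i,w⟩) (rows |A_i| ≤ 1), let v̄, ū, γ be the optimal offset, maximum margin direction, and margin from the structural decomposition. Then the point z := v̄ + (ln(t)/γ) ū satisfies |z|² = |v̄|² + ln(t)²/γ² and R(z) ≤ inf_w R(w) + exp(|v̄|)/t for every t ≥ 1. -/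
open scoped RealInnerProductSpace

/-- The comparator point `z = v̄ + (ln t / γ) ū` on the optimal ray has squared norm
`|v̄|² + ln(t)²/γ²` and risk within `exp(|v̄|)/t` of the infimal risk. -/
theorem comparator_point_low_risk {n d : ℕ} (hn : 0 < n)
    (A : Fin n → EuclideanSpace ℝ (Fin d)) (hA : ∀ i, ‖A i‖ ≤ 1)
    (ℓ : ℝ → ℝ)
    (hℓ : ℓ = (fun z => Real.log (1 + Real.exp z)) ∨ ℓ = Real.exp)
    (R : EuclideanSpace ℝ (Fin d) → ℝ)
    (hR : ∀ w, R w = (1 / (n : ℝ)) * ∑ i, ℓ ⟪A i, w⟫)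
    (C : Finset (Fin n)) (vbar ubar : EuclideanSpace ℝ (Fin d)) (γ : ℝ) (hγ : 0 < γ)
    (hunorm : ‖ubar‖ = 1) (horth : ⟪vbar, ubar⟫ = 0)
    (hmargin : ∀ i ∈ C, ⟪A i, ubar⟫ ≤ -γ) (hperp : ∀ i ∉ C, ⟪A i, ubar⟫ = 0)
    (hinf : (⨅ w : EuclideanSpace ℝ (Fin d), R w) = (1 / (n : ℝ)) * ∑ i ∈ Cᶜ, ℓ ⟪A i, vbar⟫)
    (t : ℝ) (ht : 1 ≤ t) :
    ‖vbar + (Real.log t / γ) • ubar‖ ^ 2 = ‖vbar‖ ^ 2 + Real.log t ^ 2 / γ ^ 2 ∧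
    R (vbar + (Real.log t / γ) • ubar) ≤
      (⨅ w : EuclideanSpace ℝ (Fin d), R w) + Real.exp ‖vbar‖ / t := by
  have ht0 : (0:ℝ) < t := lt_of_lt_of_le one_pos ht
  have hlt : 0 ≤ Real.log t := Real.log_nonneg ht
  set c := Real.log t / γ with hc
  have hc0 : 0 ≤ c := div_nonneg hlt hγ.le
  have hℓexp : ∀ x, ℓ x ≤ Real.exp x := by
    intro x
    rcases hℓ with h | h <;> subst h
    · simp only
      rw [Real.log_le_iff_le_exp (by positivity)]
      linarith [Real.add_one_le_exp (Real.exp x)]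
    · exact le_refl _
  have hinner : ∀ i, ⟪A i, vbar + c • ubar⟫ = ⟪A i, vbar⟫ + c * ⟪A i, ubar⟫ := by
    intro i; rw [inner_add_right, real_inner_smul_right]
  constructor
  · rw [norm_add_sq_real, real_inner_smul_right, horth, norm_smul, hunorm]
    simp [abs_of_nonneg hc0, mul_pow, hc, div_pow]
  · have key : ∀ i ∈ C, ℓ ⟪A i, vbar + c • ubar⟫ ≤ Real.exp ‖vbar‖ / t := by
      intro i hi
      calc ℓ ⟪A i, vbar + c • ubar⟫ ≤ Real.exp ⟪A i, vbar + c • ubar⟫ := hℓexp _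
        _ ≤ Real.exp (‖vbar‖ - Real.log t) := by
            apply Real.exp_le_exp.2
            rw [hinner]
            have h1 : ⟪A i, vbar⟫ ≤ ‖vbar‖ := by
              have := real_inner_le_norm (A i) vbar
              nlinarith [hA i, norm_nonneg vbar, norm_nonneg (A i)]
            have h2 : c * ⟪A i, ubar⟫ ≤ c * (-γ) :=
              mul_le_mul_of_nonneg_left (hmargin i hi) hc0
            have h3 : c * (-γ) = -Real.log t := by
              rw [hc, mul_neg, div_mul_cancel₀ _ hγ.ne']
            linarith
        _ = Real.exp ‖vbar‖ / t := by rw [Real.exp_sub, Real.exp_log ht0]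
    have hsplit : ∑ i, ℓ ⟪A i, vbar + c • ubar⟫ =
        (∑ i ∈ C, ℓ ⟪A i, vbar + c • ubar⟫) + ∑ i ∈ Cᶜ, ℓ ⟪A i, vbar + c • ubar⟫ :=
      (Finset.sum_add_sum_compl C _).symm
    have hCc : ∀ i ∈ Cᶜ, ℓ ⟪A i, vbar + c • ubar⟫ = ℓ ⟪A i, vbar⟫ := by
      intro i hi
      rw [hinner, hperp i (Finset.mem_compl.1 hi), mul_zero, add_zero]
    have hCsum : ∑ i ∈ C, ℓ ⟪A i, vbar + c • ubar⟫ ≤ C.card * (Real.exp ‖vbar‖ / t) := by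
      calc ∑ i ∈ C, ℓ ⟪A i, vbar + c • ubar⟫ ≤ ∑ _i ∈ C, Real.exp ‖vbar‖ / t :=
            Finset.sum_le_sum key
        _ = C.card * (Real.exp ‖vbar‖ / t) := by rw [Finset.sum_const, nsmul_eq_mul]
    have hcard : (C.card : ℝ) ≤ (n : ℝ) := by
      exact_mod_cast (Finset.card_le_univ C).trans_eq (Fintype.card_fin n)
    have hn' : (0:ℝ) < (n:ℝ) := by exact_mod_cast hn
    have hE : 0 ≤ Real.exp ‖vbar‖ / t := by positivity
    rw [hR, hinf, hsplit, Finset.sum_congr rfl hCc]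
    have h4 : (1 / (n:ℝ)) * (∑ i ∈ C, ℓ ⟪A i, vbar + c • ubar⟫) ≤ Real.exp ‖vbar‖ / t := by
      have step : (1 / (n:ℝ)) * (∑ i ∈ C, ℓ ⟪A i, vbar + c • ubar⟫)
          ≤ (1 / (n:ℝ)) * (C.card * (Real.exp ‖vbar‖ / t)) :=
        mul_le_mul_of_nonneg_left hCsum (by positivity)
      refine step.trans ?_
      rw [← mul_assoc]
      have h5 : (1 / (n:ℝ)) * (C.card : ℝ) ≤ 1 := by
        rw [div_mul_eq_mul_div, one_mul, div_le_one hn']; exact hcard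
      nlinarith [h5, hE]
    nlinarith [h4]
end

section
/- For ℓ ∈ {logistic, exponential}, gradient descent w_{j+1} = w_j − η_j ∇R(w_j) from w_0 = 0 with step sizes η_j ≤ 1 satisfies, for every t ≥ 1: R(w_t) − inf_w R(w) ≤ exp(|v̄|)/t + (|v̄|² + ln(t)²/γ²)/(2 Σ_{j<t} η_j). -/
open scoped RealInnerProductSpace


structure NiceLoss (ℓ D D2 : ℝ → ℝ) : Prop where
  hd : ∀ z, HasDerivAt ℓ (D z) z
  hd2 : ∀ z, HasDerivAt D (D2 z) z
  hD0 : ∀ z, 0 ≤ D z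
  hDle : ∀ z, D z ≤ ℓ z
  hD20 : ∀ z, 0 ≤ D2 z
  hD2le : ∀ z, D2 z ≤ ℓ z
  hnn : ∀ z, 0 ≤ ℓ z
  h0 : ℓ 0 ≤ 1
  hle : ∀ z, ℓ z ≤ Real.exp z

lemma niceLoss_exists {ℓ : ℝ → ℝ}
    (hℓ : ℓ = (fun z => Real.log (1 + Real.exp z)) ∨ ℓ = Real.exp) :
    ∃ D D2 : ℝ → ℝ, NiceLoss ℓ D D2 := by
  rcases hℓ with h | h
  · subst h
    have hpos : ∀ z : ℝ, (0:ℝ) < 1 + Real.exp z := fun z => by positivity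
    have key : ∀ z : ℝ, Real.exp z / (1 + Real.exp z) ≤ Real.log (1 + Real.exp z) := by
      intro z
      set x := Real.exp z with hx
      have hx0 : 0 < x := Real.exp_pos z
      set t := x / (1 + x) with htdef
      have h3 : 1 - t = (1 + x)⁻¹ := by rw [htdef]; field_simp; ring
      have h1 : (1 + x)⁻¹ ≤ (Real.exp t)⁻¹ := by
        rw [← Real.exp_neg, ← h3]
        have := Real.add_one_le_exp (-t)
        linarith
      have e1 : Real.exp t * (1 + x)⁻¹ ≤ 1 := by
        calc Real.exp t * (1 + x)⁻¹ ≤ Real.exp t * (Real.exp t)⁻¹ :=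
              mul_le_mul_of_nonneg_left h1 (Real.exp_pos t).le
          _ = 1 := mul_inv_cancel₀ (Real.exp_ne_zero t)
      have h2 : Real.exp t ≤ 1 + x := by
        have := (div_le_one (by positivity : (0:ℝ) < 1 + x)).mp
          (by rw [div_eq_mul_inv]; exact e1)
        exact this
      exact (Real.le_log_iff_exp_le (by positivity)).mpr h2
    refine ⟨fun z => Real.exp z / (1 + Real.exp z),
      fun z => Real.exp z / (1 + Real.exp z) ^ 2, ?_, ?_, ?_, ?_, ?_, ?_, ?_, ?_, ?_⟩
    · intro z
      exact ((Real.hasDerivAt_exp z).const_add 1).log (ne_of_gt (hpos z))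
    · intro z
      have h := (Real.hasDerivAt_exp z).div ((Real.hasDerivAt_exp z).const_add 1)
        (ne_of_gt (hpos z))
      exact h.congr_deriv (by field_simp; ring)
    · intro z; positivity
    · exact key
    · intro z; positivity
    · intro z
      refine le_trans ?_ (key z)
      apply div_le_div_of_nonneg_left (Real.exp_pos z).le (hpos z)
      nlinarith [Real.exp_pos z, hpos z]
    · intro z; exact Real.log_nonneg (by nlinarith [Real.exp_pos z])
    · simp only [Real.exp_zero]
      norm_num
      calc Real.log 2 ≤ 0.6931471808 := Real.log_two_lt_d9.le
        _ ≤ 1 := by norm_num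
    · intro z
      have := Real.log_le_sub_one_of_pos (hpos z)
      linarith
  · subst h
    exact ⟨Real.exp, Real.exp, fun z => Real.hasDerivAt_exp z, fun z => Real.hasDerivAt_exp z,
      fun z => (Real.exp_pos z).le, fun z => le_refl _, fun z => (Real.exp_pos z).le,
      fun z => le_refl _, fun z => (Real.exp_pos z).le, by simp, fun z => le_refl _⟩

namespace NiceLoss

variable {ℓ D D2 : ℝ → ℝ} (h : NiceLoss ℓ D D2)

include h

lemma dmono : Monotone D :=
  monotone_of_deriv_nonneg (fun z => (h.hd2 z).differentiableAt)
    (fun z => by rw [(h.hd2 z).deriv]; exact h.hD20 z)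

lemma mono : Monotone ℓ :=
  monotone_of_deriv_nonneg (fun z => (h.hd z).differentiableAt)
    (fun z => by rw [(h.hd z).deriv]; exact h.hD0 z)

lemma grad_ineq (x y : ℝ) : ℓ x + D x * (y - x) ≤ ℓ y := by
  rcases lt_trichotomy x y with hxy | rfl | hxy
  · obtain ⟨c, hc, hceq⟩ := exists_hasDerivAt_eq_slope ℓ D hxy
      (fun z _ => (h.hd z).differentiableAt.continuousAt.continuousWithinAt)
      (fun z _ => h.hd z)
    have hDc : D x ≤ D c := h.dmono (le_of_lt hc.1)
    have hne : y - x ≠ 0 := sub_ne_zero.mpr hxy.ne'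
    have heq2 : ℓ y - ℓ x = D c * (y - x) := by rw [hceq]; field_simp
    nlinarith [heq2, hDc, sub_pos.mpr hxy]
  · simp
  · obtain ⟨c, hc, hceq⟩ := exists_hasDerivAt_eq_slope ℓ D hxy
      (fun z _ => (h.hd z).differentiableAt.continuousAt.continuousWithinAt)
      (fun z _ => h.hd z)
    have hDc : D c ≤ D x := h.dmono (le_of_lt hc.2)
    have hne : x - y ≠ 0 := sub_ne_zero.mpr hxy.ne'
    have heq2 : ℓ x - ℓ y = D c * (x - y) := by rw [hceq]; field_simp
    nlinarith [heq2, hDc, sub_pos.mpr hxy]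

lemma convexOn : ConvexOn ℝ Set.univ ℓ := by
  apply MonotoneOn.convexOn_of_deriv convex_univ
    (fun z _ => (h.hd z).differentiableAt.continuousAt.continuousWithinAt)
    ((fun z _ => (h.hd z).differentiableAt.differentiableWithinAt))
  intro a _ b _ hab
  rw [(h.hd a).deriv, (h.hd b).deriv]
  exact h.dmono hab

end NiceLoss

lemma taylor_aux (φ φ' φ'' : ℝ → ℝ) (h1 : ∀ s, HasDerivAt φ (φ' s) s)
    (h2 : ∀ s, HasDerivAt φ' (φ'' s) s) (M : ℝ)
    (hM : ∀ s ∈ Set.Icc (0:ℝ) 1, φ'' s ≤ M) :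
    φ 1 ≤ φ 0 + φ' 0 + M / 2 := by
  set ψ : ℝ → ℝ := fun s => φ 0 + s * φ' 0 + M * s ^ 2 / 2 - φ s with hψ
  set ψ' : ℝ → ℝ := fun s => φ' 0 + M * s - φ' s with hψ'
  have hdψ : ∀ s, HasDerivAt ψ (ψ' s) s := by
    intro s
    have ha : HasDerivAt (fun s : ℝ => φ 0 + s * φ' 0 + M * s ^ 2 / 2)
        (φ' 0 + M * s) s := by
      have hb : HasDerivAt (fun s : ℝ => s * φ' 0) (φ' 0) s := hasDerivAt_mul_const _
      have hc : HasDerivAt (fun s : ℝ => M * s ^ 2 / 2) (M * s) s := by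
        have := ((hasDerivAt_pow 2 s).const_mul M).div_const 2
        exact this.congr_deriv (by push_cast; ring)
      exact (hb.const_add (φ 0)).add hc
    exact ha.sub (h1 s)
  have hdψ' : ∀ s, HasDerivAt ψ' (M - φ'' s) s := by
    intro s
    have hms : HasDerivAt (fun s : ℝ => φ' 0 + M * s) M s := by
      simpa [mul_comm] using ((hasDerivAt_id s).const_mul M).const_add (φ' 0)
    exact hms.sub (h2 s)
  have hψ'mono : MonotoneOn ψ' (Set.Icc (0:ℝ) 1) := by
    apply monotoneOn_of_deriv_nonneg (convex_Icc 0 1)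
      (fun s _ => (hdψ' s).differentiableAt.continuousAt.continuousWithinAt)
      (fun s _ => (hdψ' s).differentiableAt.differentiableWithinAt)
    intro s hs
    rw [interior_Icc] at hs
    rw [(hdψ' s).deriv]
    have := hM s ⟨hs.1.le, hs.2.le⟩
    linarith
  have hψ'0 : ψ' 0 = 0 := by simp [hψ']
  have hψ'nonneg : ∀ s ∈ Set.Icc (0:ℝ) 1, 0 ≤ ψ' s := by
    intro s hs
    have := hψ'mono (Set.left_mem_Icc.mpr one_pos.le) hs hs.1
    rw [hψ'0] at this
    exact this
  have hψmono : MonotoneOn ψ (Set.Icc (0:ℝ) 1) := by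
    apply monotoneOn_of_deriv_nonneg (convex_Icc 0 1)
      (fun s _ => (hdψ s).differentiableAt.continuousAt.continuousWithinAt)
      (fun s _ => (hdψ s).differentiableAt.differentiableWithinAt)
    intro s hs
    rw [interior_Icc] at hs
    rw [(hdψ s).deriv]
    exact hψ'nonneg s ⟨hs.1.le, hs.2.le⟩
  have h01 : ψ 0 ≤ ψ 1 :=
    hψmono (Set.left_mem_Icc.mpr one_pos.le) (Set.right_mem_Icc.mpr one_pos.le) one_pos.le
  simp only [hψ] at h01
  nlinarith [h01]


set_option maxHeartbeats 1000000 in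
/-- Risk convergence of gradient descent for the logistic or exponential loss:
`R(w_t) − inf_w R(w) ≤ exp(|v̄|)/t + (|v̄|² + ln(t)²/γ²)/(2 Σ_{j<t} η_j)`. -/
theorem gd_risk_convergence {n d : ℕ} (hn : 0 < n)
    (A : Fin n → EuclideanSpace ℝ (Fin d)) (hA : ∀ i, ‖A i‖ ≤ 1)
    (ℓ : ℝ → ℝ)
    (hℓ : ℓ = (fun z => Real.log (1 + Real.exp z)) ∨ ℓ = Real.exp)
    (R : EuclideanSpace ℝ (Fin d) → ℝ)
    (hR : ∀ w, R w = (1 / (n : ℝ)) * ∑ i, ℓ ⟪A i, w⟫)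
    (C : Finset (Fin n)) (vbar ubar : EuclideanSpace ℝ (Fin d)) (γ : ℝ) (hγ : 0 < γ)
    (hunorm : ‖ubar‖ = 1) (horth : ⟪vbar, ubar⟫ = 0)
    (hmargin : ∀ i ∈ C, ⟪A i, ubar⟫ ≤ -γ) (hperp : ∀ i ∉ C, ⟪A i, ubar⟫ = 0)
    (hinf : (⨅ w : EuclideanSpace ℝ (Fin d), R w) = (1 / (n : ℝ)) * ∑ i ∈ Cᶜ, ℓ ⟪A i, vbar⟫)
    (η : ℕ → ℝ) (hη : ∀ j, 0 < η j ∧ η j ≤ 1)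
    (w : ℕ → EuclideanSpace ℝ (Fin d)) (hw0 : w 0 = 0)
    (hiter : ∀ j, w (j + 1) = w j - η j • gradient R (w j))
    (t : ℕ) (ht : 1 ≤ t) :
    R (w t) - (⨅ w' : EuclideanSpace ℝ (Fin d), R w') ≤
      Real.exp ‖vbar‖ / t +
        (‖vbar‖ ^ 2 + Real.log t ^ 2 / γ ^ 2) / (2 * ∑ j ∈ Finset.range t, η j) := by
  obtain ⟨D, D2, hL⟩ := niceLoss_exists hℓ
  have hn' : (0:ℝ) < (n:ℝ) := Nat.cast_pos.mpr hn
  have hcn : (0:ℝ) < 1 / (n:ℝ) := by positivity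
  set g : EuclideanSpace ℝ (Fin d) → EuclideanSpace ℝ (Fin d) :=
    fun u => (1/(n:ℝ)) • ∑ i, D ⟪A i, u⟫ • A i with hgdef
  -- inner product with g
  have hinnerg : ∀ u v : EuclideanSpace ℝ (Fin d),
      ⟪g u, v⟫ = (1/(n:ℝ)) * ∑ i, D ⟪A i, u⟫ * ⟪A i, v⟫ := by
    intro u v
    rw [hgdef]
    rw [real_inner_smul_left, sum_inner]
    congr 1
    exact Finset.sum_congr rfl fun i _ => real_inner_smul_left _ _ _
  -- the gradient formula
  have hgrad : ∀ u, HasGradientAt R (g u) u := by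
    intro u
    have hfd : HasFDerivAt R
        ((1/(n:ℝ)) • ∑ i, D ⟪A i, u⟫ •
          (innerSL ℝ (A i) : EuclideanSpace ℝ (Fin d) →L[ℝ] ℝ)) u := by
      have hfun : R = fun w => (1/(n:ℝ)) * ∑ i, ℓ ⟪A i, w⟫ := funext hR
      rw [hfun]
      have hterm : ∀ i : Fin n, HasFDerivAt
          (fun w : EuclideanSpace ℝ (Fin d) => ℓ ⟪A i, w⟫)
          (D ⟪A i, u⟫ • (innerSL ℝ (A i) : EuclideanSpace ℝ (Fin d) →L[ℝ] ℝ)) u := by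
        intro i
        exact (hL.hd ⟪A i, u⟫).comp_hasFDerivAt u ((innerSL ℝ (A i)).hasFDerivAt)
      have hsum := HasFDerivAt.sum (fun i (_ : i ∈ Finset.univ) => hterm i)
      have := hsum.const_mul (1/(n:ℝ))
      simpa [smul_eq_mul] using this
    have := hfd.hasGradientAt
    convert this using 1
    apply (InnerProductSpace.toDual ℝ (EuclideanSpace ℝ (Fin d))).injective
    rw [LinearIsometryEquiv.apply_symm_apply]
    apply ContinuousLinearMap.ext
    intro y
    rw [InnerProductSpace.toDual_apply_apply, hinnerg]
    simp [innerSL_apply_apply]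
  have hgradR : ∀ u, gradient R u = g u := fun u => (hgrad u).gradient
  -- nonnegativity of R
  have hRnn : ∀ u, 0 ≤ R u := by
    intro u
    rw [hR u]
    exact mul_nonneg hcn.le (Finset.sum_nonneg fun i _ => hL.hnn _)
  -- norm of the gradient is at most the risk
  have hgnorm : ∀ u, ‖g u‖ ≤ R u := by
    intro u
    rw [hgdef, hR u]
    calc ‖(1/(n:ℝ)) • ∑ i, D ⟪A i, u⟫ • A i‖
        = (1/(n:ℝ)) * ‖∑ i, D ⟪A i, u⟫ • A i‖ := by
          rw [norm_smul, Real.norm_eq_abs, abs_of_pos hcn]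
      _ ≤ (1/(n:ℝ)) * ∑ i, ℓ ⟪A i, u⟫ := by
          apply mul_le_mul_of_nonneg_left _ hcn.le
          refine le_trans (norm_sum_le _ _) (Finset.sum_le_sum fun i _ => ?_)
          rw [norm_smul, Real.norm_eq_abs, abs_of_nonneg (hL.hD0 _)]
          calc D ⟪A i, u⟫ * ‖A i‖ ≤ D ⟪A i, u⟫ * 1 :=
                mul_le_mul_of_nonneg_left (hA i) (hL.hD0 _)
            _ = D ⟪A i, u⟫ := mul_one _
            _ ≤ ℓ ⟪A i, u⟫ := hL.hDle _
  -- convexity inequality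
  have hconv : ∀ u v, R u + ⟪g u, v - u⟫ ≤ R v := by
    intro u v
    rw [hR u, hR v, hinnerg]
    have : ∀ i : Fin n, D ⟪A i, u⟫ * ⟪A i, v - u⟫
        = D ⟪A i, u⟫ * (⟪A i, v⟫ - ⟪A i, u⟫) := by
      intro i; rw [inner_sub_right]
    rw [Finset.sum_congr rfl fun i _ => this i, ← mul_add, ← Finset.sum_add_distrib]
    apply mul_le_mul_of_nonneg_left _ hcn.le
    exact Finset.sum_le_sum fun i _ => hL.grad_ineq _ _
  -- smoothness inequality
  have hsmooth : ∀ u Δ : EuclideanSpace ℝ (Fin d), R (u + Δ) ≤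
      R u + ⟪g u, Δ⟫ + (‖Δ‖^2 * max (R u) (R (u + Δ))) / 2 := by
    intro u Δ
    set φ : ℝ → ℝ := fun s => (1/(n:ℝ)) * ∑ i, ℓ (⟪A i, u⟫ + s * ⟪A i, Δ⟫) with hφdef
    set φ' : ℝ → ℝ := fun s => (1/(n:ℝ)) * ∑ i, D (⟪A i, u⟫ + s * ⟪A i, Δ⟫) * ⟪A i, Δ⟫
      with hφ'def
    set φ'' : ℝ → ℝ := fun s =>
      (1/(n:ℝ)) * ∑ i, D2 (⟪A i, u⟫ + s * ⟪A i, Δ⟫) * ⟪A i, Δ⟫ * ⟪A i, Δ⟫ with hφ''def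
    have hlin : ∀ (i : Fin n) (s : ℝ),
        HasDerivAt (fun s : ℝ => ⟪A i, u⟫ + s * ⟪A i, Δ⟫) (⟪A i, Δ⟫) s := by
      intro i s
      simpa using (hasDerivAt_mul_const (⟪A i, Δ⟫ : ℝ)).const_add (⟪A i, u⟫ : ℝ)
    have hdφ : ∀ s, HasDerivAt φ (φ' s) s := by
      intro s
      apply HasDerivAt.const_mul
      exact HasDerivAt.fun_sum fun i _ => (hL.hd _).comp s (hlin i s)
    have hdφ' : ∀ s, HasDerivAt φ' (φ'' s) s := by
      intro s
      apply HasDerivAt.const_mul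
      exact HasDerivAt.fun_sum fun i _ => ((hL.hd2 _).comp s (hlin i s)).mul_const _
    have hφval : ∀ s : ℝ, φ s = R (u + s • Δ) := by
      intro s
      rw [hφdef, hR (u + s • Δ)]
      simp only [inner_add_right, real_inner_smul_right]
    have hφ0 : φ 0 = R u := by rw [hφval 0]; simp
    have hφ1 : φ 1 = R (u + Δ) := by rw [hφval 1]; simp
    have hφ'0 : φ' 0 = ⟪g u, Δ⟫ := by
      rw [hφ'def, hinnerg]
      simp
    have hφconvmax : ∀ s ∈ Set.Icc (0:ℝ) 1, φ s ≤ max (φ 0) (φ 1) := by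
      intro s hs
      have key : φ s ≤ (1 - s) * φ 0 + s * φ 1 := by
        rw [hφdef]
        simp only [zero_mul, add_zero, one_mul]
        have hper : ∀ i : Fin n, ℓ (⟪A i, u⟫ + s * ⟪A i, Δ⟫) ≤
            (1 - s) * ℓ ⟪A i, u⟫ + s * ℓ (⟪A i, u⟫ + ⟪A i, Δ⟫) := by
          intro i
          have := hL.convexOn.2 (Set.mem_univ (⟪A i, u⟫ : ℝ))
            (Set.mem_univ ((⟪A i, u⟫ : ℝ) + ⟪A i, Δ⟫))
            (by linarith [hs.2] : (0:ℝ) ≤ 1 - s) hs.1 (by ring)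
          simp only [smul_eq_mul] at this
          calc ℓ (⟪A i, u⟫ + s * ⟪A i, Δ⟫)
              = ℓ ((1 - s) * ⟪A i, u⟫ + s * (⟪A i, u⟫ + ⟪A i, Δ⟫)) := by ring_nf
            _ ≤ (1 - s) * ℓ ⟪A i, u⟫ + s * ℓ (⟪A i, u⟫ + ⟪A i, Δ⟫) := this
        calc (1/(n:ℝ)) * ∑ i, ℓ (⟪A i, u⟫ + s * ⟪A i, Δ⟫)
            ≤ (1/(n:ℝ)) * ∑ i, ((1 - s) * ℓ ⟪A i, u⟫ + s * ℓ (⟪A i, u⟫ + ⟪A i, Δ⟫)) :=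
              mul_le_mul_of_nonneg_left (Finset.sum_le_sum fun i _ => hper i) hcn.le
          _ = (1 - s) * ((1/(n:ℝ)) * ∑ i, ℓ ⟪A i, u⟫) +
              s * ((1/(n:ℝ)) * ∑ i, ℓ (⟪A i, u⟫ + ⟪A i, Δ⟫)) := by
              rw [Finset.sum_add_distrib, ← Finset.mul_sum, ← Finset.mul_sum]
              ring
      have h1 : (1 - s) * φ 0 + s * φ 1 ≤ max (φ 0) (φ 1) := by
        have h2 : φ 0 ≤ max (φ 0) (φ 1) := le_max_left _ _
        have h3 : φ 1 ≤ max (φ 0) (φ 1) := le_max_right _ _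
        nlinarith [hs.1, hs.2]
      linarith
    have hci : ∀ i : Fin n, (⟪A i, Δ⟫ : ℝ)^2 ≤ ‖Δ‖^2 := by
      intro i
      have h1 : |(⟪A i, Δ⟫ : ℝ)| ≤ ‖A i‖ * ‖Δ‖ := abs_real_inner_le_norm _ _
      have h2 : ‖A i‖ * ‖Δ‖ ≤ 1 * ‖Δ‖ := mul_le_mul_of_nonneg_right (hA i) (norm_nonneg _)
      have h3 : |(⟪A i, Δ⟫ : ℝ)| ≤ ‖Δ‖ := by linarith
      calc (⟪A i, Δ⟫ : ℝ)^2 = |(⟪A i, Δ⟫ : ℝ)|^2 := (sq_abs _).symm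
        _ ≤ ‖Δ‖^2 := by nlinarith [abs_nonneg (⟪A i, Δ⟫ : ℝ)]
    have hM : ∀ s ∈ Set.Icc (0:ℝ) 1, φ'' s ≤ ‖Δ‖^2 * max (φ 0) (φ 1) := by
      intro s hs
      have step1 : φ'' s ≤ ‖Δ‖^2 * φ s := by
        rw [hφ''def, hφdef]
        rw [← mul_assoc, mul_comm (‖Δ‖^2) (1/(n:ℝ)), mul_assoc]
        apply mul_le_mul_of_nonneg_left _ hcn.le
        rw [Finset.mul_sum]
        refine Finset.sum_le_sum fun i _ => ?_
        have hD2i := hL.hD20 (⟪A i, u⟫ + s * ⟪A i, Δ⟫)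
        have hD2le := hL.hD2le (⟪A i, u⟫ + s * ⟪A i, Δ⟫)
        have := hci i
        nlinarith [hL.hnn (⟪A i, u⟫ + s * ⟪A i, Δ⟫), sq_nonneg (⟪A i, Δ⟫ : ℝ)]
      have step2 : ‖Δ‖^2 * φ s ≤ ‖Δ‖^2 * max (φ 0) (φ 1) :=
        mul_le_mul_of_nonneg_left (hφconvmax s hs) (sq_nonneg _)
      linarith
    have := taylor_aux φ φ' φ'' hdφ hdφ' (‖Δ‖^2 * max (φ 0) (φ 1)) hM
    rw [hφ0, hφ1, hφ'0] at this
    exact this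
  -- gradient step form
  have hstep : ∀ j, w (j+1) = w j + (-(η j) • g (w j)) := by
    intro j
    rw [hiter j, hgradR (w j), neg_smul, ← sub_eq_add_neg]
  -- descent lemma
  have hdescent : ∀ j, R (w j) ≤ 1 →
      R (w (j+1)) + η j / 2 * ‖g (w j)‖^2 ≤ R (w j) := by
    intro j hRj
    obtain ⟨hη1, hη2⟩ := hη j
    have hs := hsmooth (w j) (-(η j) • g (w j))
    rw [← hstep j] at hs
    have hinner : ⟪g (w j), -(η j) • g (w j)⟫ = -(η j) * ‖g (w j)‖^2 := by
      rw [real_inner_smul_right, real_inner_self_eq_norm_sq]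
    have hΔn : ‖-(η j) • g (w j)‖^2 = η j^2 * ‖g (w j)‖^2 := by
      rw [norm_smul, Real.norm_eq_abs, abs_neg, abs_of_pos hη1, mul_pow]
    rw [hinner, hΔn] at hs
    set a := R (w j) with ha
    set b := R (w (j+1)) with hb
    set G := ‖g (w j)‖^2 with hG
    have hG0 : 0 ≤ G := sq_nonneg _
    have ha0 : 0 ≤ a := hRnn _
    have hb0 : 0 ≤ b := hRnn _
    have hGa : G ≤ a^2 := by
      rw [hG]
      have := hgnorm (w j)
      nlinarith [norm_nonneg (g (w j))]
    have hGa1 : G ≤ 1 := by nlinarith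
    have hηa : η j * a ≤ 1 := by nlinarith
    rcases le_total b a with hba | hab
    · rw [max_eq_left hba] at hs
      nlinarith [mul_nonneg (mul_nonneg hη1.le hG0) (sub_nonneg.mpr hηa)]
    · rw [max_eq_right hab] at hs
      have hη2G : η j^2 * G ≤ 1 := by nlinarith
      have hb2 : b ≤ 2 := by
        nlinarith [mul_le_mul_of_nonneg_left hη2G hb0, mul_nonneg hη1.le hG0]
      have hηb : η j * b ≤ 2 := by nlinarith
      have hba' : b ≤ a := by
        nlinarith [mul_le_mul_of_nonneg_left hηb (mul_nonneg hη1.le hG0)]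
      have heq : b = a := le_antisymm hba' hab
      rw [heq] at hs
      have hηG0 : 0 ≤ η j * G := mul_nonneg hη1.le hG0
      have hηG : η j * G ≤ 0 := by
        nlinarith [mul_nonneg (mul_nonneg hη1.le hG0) (sub_nonneg.mpr hηa)]
      rw [heq]
      nlinarith
  -- invariant: risk stays at most 1
  have hR0 : R (w 0) ≤ 1 := by
    rw [hw0, hR 0]
    simp only [inner_zero_right]
    rw [Finset.sum_const, Finset.card_univ, Fintype.card_fin, nsmul_eq_mul, ← mul_assoc]
    have hone : (1/(n:ℝ)) * (n:ℝ) = 1 := by field_simp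
    rw [hone, one_mul]
    exact hL.h0
  have hinv : ∀ j, R (w j) ≤ 1 := by
    intro j
    induction j with
    | zero => exact hR0
    | succ k ih =>
      have := hdescent k ih
      nlinarith [sq_nonneg ‖g (w k)‖, (hη k).1]
  have hdec : ∀ j, R (w (j+1)) ≤ R (w j) := by
    intro j
    have := hdescent j (hinv j)
    nlinarith [sq_nonneg ‖g (w j)‖, (hη j).1]
  have hmonoR : ∀ j k, j ≤ k → R (w k) ≤ R (w j) := by
    intro j k hjk
    induction k, hjk using Nat.le_induction with
    | base => exact le_rfl
    | succ k hk ih => exact (hdec k).trans ih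
  -- the comparator
  set r : ℝ := Real.log t / γ with hrdef
  have ht1 : (1:ℝ) ≤ (t:ℝ) := by exact_mod_cast ht
  have htpos : (0:ℝ) < (t:ℝ) := by linarith
  have hr0 : 0 ≤ r := div_nonneg (Real.log_nonneg ht1) hγ.le
  set z : EuclideanSpace ℝ (Fin d) := vbar + r • ubar with hzdef
  have hKj : ∀ j, ‖w (j+1) - z‖^2 ≤ ‖w j - z‖^2 - 2 * η j * (R (w (j+1)) - R z) := by
    intro j
    obtain ⟨hη1, hη2⟩ := hη j
    have hrw : w (j+1) - z = (w j - z) - η j • g (w j) := by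
      rw [hiter j, hgradR]
      abel
    rw [hrw, norm_sub_sq_real, real_inner_smul_right]
    have hnn2 : ‖η j • g (w j)‖^2 = η j^2 * ‖g (w j)‖^2 := by
      rw [norm_smul, Real.norm_eq_abs, abs_of_pos hη1, mul_pow]
    rw [hnn2]
    have hcv := hconv (w j) z
    have hie : (⟪w j - z, g (w j)⟫:ℝ) = -⟪g (w j), z - w j⟫ := by
      rw [real_inner_comm]
      simp only [inner_sub_right]
      ring
    rw [hie]
    have hds := hdescent j (hinv j)
    have h2η : (0:ℝ) ≤ 2 * η j := by linarith
    have c1 := mul_le_mul_of_nonneg_left hcv h2η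
    have c2 := mul_le_mul_of_nonneg_left hds h2η
    linarith [c1, c2]
  have htel : ∀ m, ‖w m - z‖^2 ≤ ‖w 0 - z‖^2
      - 2 * ∑ j ∈ Finset.range m, η j * (R (w (j+1)) - R z) := by
    intro m
    induction m with
    | zero => simp
    | succ k ih =>
      rw [Finset.sum_range_succ]
      have := hKj k
      linarith
  have hSpos : 0 < ∑ j ∈ Finset.range t, η j :=
    Finset.sum_pos (fun j _ => (hη j).1) (Finset.nonempty_range_iff.mpr (by omega))
  have hsumLB : (∑ j ∈ Finset.range t, η j) * (R (w t) - R z)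
      ≤ ∑ j ∈ Finset.range t, η j * (R (w (j+1)) - R z) := by
    rw [Finset.sum_mul]
    refine Finset.sum_le_sum fun j hj => ?_
    have hjt : j + 1 ≤ t := by
      rw [Finset.mem_range] at hj; omega
    have := hmonoR (j+1) t hjt
    have hη1 := (hη j).1
    exact mul_le_mul_of_nonneg_left (sub_le_sub_right this _) hη1.le
  have hw0z : ‖w 0 - z‖^2 = ‖z‖^2 := by rw [hw0, zero_sub, norm_neg]
  have hmain1 : R (w t) - R z ≤ ‖z‖^2 / (2 * ∑ j ∈ Finset.range t, η j) := by
    rw [le_div_iff₀ (by positivity)]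
    have h1 := htel t
    have h2 : 0 ≤ ‖w t - z‖^2 := sq_nonneg _
    rw [hw0z] at h1
    linarith [h1, h2, hsumLB]
  have hz2 : ‖z‖^2 = ‖vbar‖^2 + Real.log t^2 / γ^2 := by
    rw [hzdef, norm_add_sq_real, real_inner_smul_right, horth, norm_smul,
      Real.norm_eq_abs, hunorm, mul_one, sq_abs, hrdef, div_pow]
    ring
  -- comparator risk
  have hcomp : R z ≤ (1/(n:ℝ)) * ∑ i ∈ Cᶜ, ℓ ⟪A i, vbar⟫ + Real.exp ‖vbar‖ / t := by
    rw [hR z]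
    have hsplit : ∑ i, ℓ ⟪A i, z⟫ = ∑ i ∈ C, ℓ ⟪A i, z⟫ + ∑ i ∈ Cᶜ, ℓ ⟪A i, z⟫ :=
      (Finset.sum_add_sum_compl C _).symm
    have hCc : ∑ i ∈ Cᶜ, ℓ ⟪A i, z⟫ = ∑ i ∈ Cᶜ, ℓ ⟪A i, vbar⟫ := by
      refine Finset.sum_congr rfl fun i hi => ?_
      rw [Finset.mem_compl] at hi
      rw [hzdef, inner_add_right, real_inner_smul_right, hperp i hi, mul_zero, add_zero]
    have hC : ∀ i ∈ C, ℓ ⟪A i, z⟫ ≤ Real.exp ‖vbar‖ / t := by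
      intro i hi
      have h1 : (⟪A i, z⟫ : ℝ) ≤ ‖vbar‖ - Real.log t := by
        rw [hzdef, inner_add_right, real_inner_smul_right]
        have h2 : (⟪A i, vbar⟫:ℝ) ≤ ‖vbar‖ := by
          calc (⟪A i, vbar⟫:ℝ) ≤ ‖A i‖ * ‖vbar‖ := real_inner_le_norm _ _
            _ ≤ 1 * ‖vbar‖ := mul_le_mul_of_nonneg_right (hA i) (norm_nonneg _)
            _ = ‖vbar‖ := one_mul _
        have h3 : r * ⟪A i, ubar⟫ ≤ r * (-γ) := mul_le_mul_of_nonneg_left (hmargin i hi) hr0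
        have h4 : r * (-γ) = -Real.log t := by
          rw [hrdef]
          field_simp
        linarith
      calc ℓ ⟪A i, z⟫ ≤ Real.exp ⟪A i, z⟫ := hL.hle _
        _ ≤ Real.exp (‖vbar‖ - Real.log t) := Real.exp_le_exp.mpr h1
        _ = Real.exp ‖vbar‖ / t := by rw [Real.exp_sub, Real.exp_log htpos]
    have hcard : (C.card:ℝ) ≤ (n:ℝ) := by
      exact_mod_cast (Finset.card_le_univ C).trans_eq (by simp)
    have hCsum : ∑ i ∈ C, ℓ ⟪A i, z⟫ ≤ (n:ℝ) * (Real.exp ‖vbar‖ / t) := by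
      calc ∑ i ∈ C, ℓ ⟪A i, z⟫ ≤ ∑ _i ∈ C, (Real.exp ‖vbar‖ / (t:ℝ)) := Finset.sum_le_sum hC
        _ = C.card * (Real.exp ‖vbar‖ / t) := by rw [Finset.sum_const, nsmul_eq_mul]
        _ ≤ (n:ℝ) * (Real.exp ‖vbar‖ / t) :=
            mul_le_mul_of_nonneg_right hcard (by positivity)
    rw [hsplit, hCc, mul_add]
    have hfin : (1/(n:ℝ)) * ∑ i ∈ C, ℓ ⟪A i, z⟫ ≤ Real.exp ‖vbar‖ / t := by
      calc (1/(n:ℝ)) * ∑ i ∈ C, ℓ ⟪A i, z⟫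
          ≤ (1/(n:ℝ)) * ((n:ℝ) * (Real.exp ‖vbar‖ / t)) :=
            mul_le_mul_of_nonneg_left hCsum hcn.le
        _ = Real.exp ‖vbar‖ / t := by field_simp
    linarith
  -- conclude
  rw [hinf]
  rw [hz2] at hmain1
  linarith
end

section
/- Let ℓ ∈ {logistic, exponential} and A = A_c = A_⊥ be fully separable data with margin γ and dual optimum q̄ (so ū = −A^T q̄/γ). Fix 0 < ε ≤ 1 and t with R(w_t) ≤ ε/n, and let w satisfy R(w) ≤ R(w_t). Then ⟨ū, w⟩/(|ū|·|w|) ≥ −ln R(w_t)/(γ|w|) − g*(q̄)/(γ|w|) − ln 2/(γ|w|), where g(v) = ln((1/n)Σ_i e^{v_i}) and g*(q̄) = ln n + Σ_i q̄_i ln q̄_i ≤ ln n. -/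
open scoped RealInnerProductSpace

lemma gibbs_aux {n : ℕ} (hn : 0 < n) (q v : Fin n → ℝ)
    (hq0 : ∀ i, 0 ≤ q i) (hq1 : (∑ i, q i) = 1) :
    ∑ i, q i * v i ≤ (∑ i, q i * Real.log (q i)) + Real.log (∑ i, Real.exp (v i)) := by
  haveI : Nonempty (Fin n) := Fin.pos_iff_nonempty.mp hn
  set S := ∑ i, Real.exp (v i) with hS
  have hSpos : 0 < S := Finset.sum_pos (fun i _ => Real.exp_pos _) Finset.univ_nonempty
  have key : ∀ i : Fin n, q i * v i - q i * Real.log (q i) - q i * Real.log S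
      ≤ Real.exp (v i) / S - q i := by
    intro i
    rcases eq_or_lt_of_le (hq0 i) with h0 | hpos
    · rw [← h0]
      simp
      positivity
    · have hqne : q i ≠ 0 := ne_of_gt hpos
      have hlog : Real.log (Real.exp (v i) / (q i * S)) ≤ Real.exp (v i) / (q i * S) - 1 :=
        Real.log_le_sub_one_of_pos (by positivity)
      have hle : Real.log (Real.exp (v i) / (q i * S)) = v i - Real.log (q i) - Real.log S := by
        rw [Real.log_div (Real.exp_ne_zero _) (by positivity), Real.log_exp,
          Real.log_mul hqne (ne_of_gt hSpos)]
        ring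
      have h2 := mul_le_mul_of_nonneg_left hlog (hq0 i)
      rw [hle] at h2
      calc q i * v i - q i * Real.log (q i) - q i * Real.log S
          = q i * (v i - Real.log (q i) - Real.log S) := by ring
        _ ≤ q i * (Real.exp (v i) / (q i * S) - 1) := h2
        _ = Real.exp (v i) / S - q i := by field_simp
  have hsum : ∑ i, (q i * v i - q i * Real.log (q i) - q i * Real.log S)
      ≤ ∑ i, (Real.exp (v i) / S - q i) := Finset.sum_le_sum fun i _ => key i
  simp only [Finset.sum_sub_distrib] at hsum
  have e1 : ∑ i : Fin n, Real.exp (v i) / S = 1 := by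
    rw [← Finset.sum_div, ← hS, div_self (ne_of_gt hSpos)]
  have e2 : ∑ i : Fin n, q i * Real.log S = Real.log S := by
    rw [← Finset.sum_mul, hq1, one_mul]
  rw [e1, e2, hq1] at hsum
  linarith

/-- Fenchel–Young alignment bound in the separable case: if `R(w_t) ≤ ε/n` and `R(w) ≤ R(w_t)`,
then `⟨ū, w⟩/(|ū||w|) ≥ −ln R(w_t)/(γ|w|) − g*(q̄)/(γ|w|) − ln 2/(γ|w|)`, where
`g*(q̄) = ln n + Σ_i q̄_i ln q̄_i`. -/
theorem fenchel_young_alignment {n d : ℕ} (hn : 0 < n)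
    (A : Fin n → EuclideanSpace ℝ (Fin d)) (hA : ∀ i, ‖A i‖ ≤ 1)
    (ℓ : ℝ → ℝ)
    (hℓ : ℓ = (fun z => Real.log (1 + Real.exp z)) ∨ ℓ = Real.exp)
    (R : EuclideanSpace ℝ (Fin d) → ℝ)
    (hR : ∀ w, R w = (1 / (n : ℝ)) * ∑ i, ℓ ⟪A i, w⟫)
    (γ : ℝ) (hγ : 0 < γ) (qbar : Fin n → ℝ)
    (hq0 : ∀ i, 0 ≤ qbar i) (hq1 : (∑ i, qbar i) = 1)
    (ubar : EuclideanSpace ℝ (Fin d))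
    (hubar : ubar = -(γ⁻¹ • ∑ i, qbar i • A i)) (hunorm : ‖ubar‖ = 1)
    (hmargin : ∀ i, ⟪A i, ubar⟫ ≤ -γ)
    (ε : ℝ) (hε0 : 0 < ε) (hε1 : ε ≤ 1)
    (wt : EuclideanSpace ℝ (Fin d)) (hwt : R wt ≤ ε / n)
    (w : EuclideanSpace ℝ (Fin d)) (hw : R w ≤ R wt) :
    ⟪ubar, w⟫ / (‖ubar‖ * ‖w‖) ≥
      -Real.log (R wt) / (γ * ‖w‖)
        - (Real.log n + ∑ i, qbar i * Real.log (qbar i)) / (γ * ‖w‖)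
        - Real.log 2 / (γ * ‖w‖) := by
  haveI : Nonempty (Fin n) := Fin.pos_iff_nonempty.mp hn
  have hn' : (0:ℝ) < n := Nat.cast_pos.mpr hn
  set v : Fin n → ℝ := fun i => ⟪A i, w⟫ with hv
  have hRw : R w = (1 / (n : ℝ)) * ∑ i, ℓ (v i) := hR w
  -- positivity of the loss
  have hℓpos : ∀ z : ℝ, 0 < ℓ z := by
    rcases hℓ with h | h <;> subst h
    · intro z; exact Real.log_pos (by linarith [Real.exp_pos z])
    · exact fun z => Real.exp_pos z
  have hRw_pos : 0 < R w := by
    rw [hRw]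
    exact mul_pos (by positivity) (Finset.sum_pos (fun i _ => hℓpos _) Finset.univ_nonempty)
  have hRwt_pos : 0 < R wt := lt_of_lt_of_le hRw_pos hw
  -- per-example bound on loss
  have hsum_le : ∑ i, ℓ (v i) ≤ 1 := by
    have h1 : (∑ i, ℓ (v i)) / n ≤ ε / n := by
      rw [div_eq_mul_inv, mul_comm, ← one_div]
      rw [← hRw]
      exact le_trans hw hwt
    have h2 : ∑ i, ℓ (v i) ≤ ε := (div_le_div_iff_of_pos_right hn').mp h1
    linarith
  -- exponential loss ≤ 2 * loss
  have hexp_le : ∀ i : Fin n, Real.exp (v i) ≤ 2 * ℓ (v i) := by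
    intro i
    rcases hℓ with h | h <;> subst h
    · set x := Real.log (1 + Real.exp (v i)) with hx
      have hx0 : 0 < x := hℓpos (v i)
      have hx1 : x ≤ 1 := by
        have h3 := Finset.single_le_sum (f := fun j => Real.log (1 + Real.exp (v j)))
          (fun j _ => le_of_lt (hℓpos (v j))) (Finset.mem_univ i)
        calc x ≤ ∑ j, Real.log (1 + Real.exp (v j)) := h3
          _ ≤ 1 := hsum_le
      have hexpx : Real.exp x = 1 + Real.exp (v i) := by
        rw [hx, Real.exp_log (by positivity)]
      have hconv := convexOn_exp.2 (Set.mem_univ (0:ℝ)) (Set.mem_univ (1:ℝ))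
        (by linarith : (0:ℝ) ≤ 1 - x) (le_of_lt hx0) (by ring)
      simp only [smul_eq_mul, mul_zero, mul_one, zero_add, Real.exp_zero] at hconv
      have he : Real.exp 1 < 2.7182818286 := Real.exp_one_lt_d9
      have h4 : Real.exp x ≤ 1 + 2 * x := by nlinarith
      rw [hexpx] at h4
      linarith
    · linarith [Real.exp_pos (v i)]
  -- Gibbs / Fenchel-Young
  have hgibbs := gibbs_aux hn qbar v hq0 hq1
  set M : ℝ := (1 / (n:ℝ)) * ∑ i, Real.exp (v i) with hM
  have hMpos : 0 < M :=
    mul_pos (by positivity) (Finset.sum_pos (fun i _ => Real.exp_pos _) Finset.univ_nonempty)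
  have hlogS : Real.log (∑ i, Real.exp (v i)) = Real.log n + Real.log M := by
    have hnm : (∑ i, Real.exp (v i)) = (n:ℝ) * M := by
      rw [hM]; field_simp
    rw [hnm, Real.log_mul (ne_of_gt hn') (ne_of_gt hMpos)]
  have hM_le : M ≤ 2 * R w := by
    rw [hM, hRw]
    have h := Finset.sum_le_sum (fun i (_ : i ∈ Finset.univ) => hexp_le i)
    rw [← Finset.mul_sum] at h
    have hnn : (0:ℝ) ≤ 1/(n:ℝ) := by positivity
    nlinarith [mul_le_mul_of_nonneg_left h hnn]
  have hlogM : Real.log M ≤ Real.log 2 + Real.log (R wt) := by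
    calc Real.log M ≤ Real.log (2 * R wt) := by
          apply Real.log_le_log hMpos
          calc M ≤ 2 * R w := hM_le
            _ ≤ 2 * R wt := by linarith
      _ = Real.log 2 + Real.log (R wt) := Real.log_mul two_ne_zero (ne_of_gt hRwt_pos)
  -- inner product identity
  have hinner : ⟪ubar, w⟫ = -(γ⁻¹ * ∑ i, qbar i * v i) := by
    rw [hubar, inner_neg_left, real_inner_smul_left, sum_inner]
    simp only [real_inner_smul_left]
    rfl
  have hinner2 : γ * ⟪ubar, w⟫ = -∑ i, qbar i * v i := by
    rw [hinner, mul_neg, ← mul_assoc, mul_inv_cancel₀ (ne_of_gt hγ), one_mul]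
  -- main scalar inequality
  have hmain : -Real.log (R wt) - (Real.log n + ∑ i, qbar i * Real.log (qbar i))
      - Real.log 2 ≤ γ * ⟪ubar, w⟫ := by
    rw [hinner2]
    have h5 : ∑ i, qbar i * v i ≤ (∑ i, qbar i * Real.log (qbar i))
        + Real.log n + Real.log M := by
      rw [hlogS] at hgibbs; linarith
    linarith
  -- conclude
  rcases eq_or_lt_of_le (norm_nonneg w) with h0 | hwpos
  · rw [hunorm, ← h0]
    norm_num
  · rw [hunorm, one_mul, ge_iff_le, div_sub_div_same, div_sub_div_same]
    have hd : 0 < γ * ‖w‖ := mul_pos hγ hwpos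
    rw [div_le_iff₀ hd]
    calc -Real.log (R wt) - (Real.log ↑n + ∑ i, qbar i * Real.log (qbar i)) - Real.log 2
        ≤ γ * ⟪ubar, w⟫ := hmain
      _ = ⟪ubar, w⟫ / ‖w‖ * (γ * ‖w‖) := by field_simp
end

section
/- In the fully separable case with ℓ = exp, rows |A_i| ≤ 1, margin γ > 0, step sizes η_j ≤ 1, and w_0 = 0, the gradient descent iterates satisfy, for all t ≥ 1: max{ |w_t/|w_t| − ū|², |w̄_t/|w̄_t| − ū|² } ≤ (2 + 2 ln n)/(|w_t| γ), where w̄_t = argmin{R(w) : |w| ≤ |w_t|}. -/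
open scoped RealInnerProductSpace


open Finset in
lemma exp_taylor4 {x : ℝ} (hx : |x| ≤ 1) :
    |Real.exp x - (1 + x + x^2/2 + x^3/6)| ≤ 5 * |x|^4 / 96 := by
  have h := Real.exp_bound hx (n := 4) (by norm_num)
  have hs : ∑ m ∈ range 4, x ^ m / m.factorial = 1 + x + x^2/2 + x^3/6 := by
    norm_num [Finset.sum_range_succ, Nat.factorial]
  rw [hs] at h
  refine h.trans (le_of_eq ?_)
  norm_num [Nat.factorial]
  ring

lemma sinh_lower {x : ℝ} (h0 : 0 ≤ x) (h1 : x ≤ 1) :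
    x + x^3/6 - 5*x^4/96 ≤ Real.sinh x := by
  have hax : |x| ≤ 1 := by rwa [abs_of_nonneg h0]
  have hax' : |(-x)| ≤ 1 := by rwa [abs_neg]
  have h1' := exp_taylor4 hax
  have h2' := exp_taylor4 hax'
  rw [Real.sinh_eq]
  rw [abs_of_nonneg h0] at h1'
  rw [abs_neg, abs_of_nonneg h0] at h2'
  have e1 := abs_le.1 h1'
  have e2 := abs_le.1 h2'
  nlinarith [e1.1, e2.2, pow_nonneg h0 4]

lemma cosh_upper {x : ℝ} (h0 : 0 ≤ x) (h1 : x ≤ 1) :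
    Real.cosh x ≤ 1 + x^2/2 + 5*x^4/96 := by
  have hax : |x| ≤ 1 := by rwa [abs_of_nonneg h0]
  have hax' : |(-x)| ≤ 1 := by rwa [abs_neg]
  have h1' := exp_taylor4 hax
  have h2' := exp_taylor4 hax'
  rw [Real.cosh_eq]
  rw [abs_of_nonneg h0] at h1'
  rw [abs_neg, abs_of_nonneg h0] at h2'
  have e1 := abs_le.1 h1'
  have e2 := abs_le.1 h2'
  nlinarith [e1.2, e2.2]





/-- Chord bound for the convex function `exp`: on `[-x,x]`,
`exp (-y) ≤ cosh x - (y/x) * sinh x`. -/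
lemma exp_chord {x y : ℝ} (hx : 0 < x) (hy : |y| ≤ x) :
    Real.exp (-y) ≤ Real.cosh x - (y / x) * Real.sinh x := by
  have hyx := abs_le.1 hy
  have h2x : (2*x) ≠ 0 := by positivity
  have ha : (0:ℝ) ≤ (x - y) / (2*x) := div_nonneg (by linarith [hyx.2]) (by linarith)
  have hb : (0:ℝ) ≤ (x + y) / (2*x) := div_nonneg (by linarith [hyx.1]) (by linarith)
  have hab : (x - y) / (2*x) + (x + y) / (2*x) = 1 := by
    rw [← add_div, div_eq_one_iff_eq h2x]; ring
  have hc := convexOn_exp.2 (Set.mem_univ x) (Set.mem_univ (-x)) ha hb hab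
  simp only [smul_eq_mul] at hc
  have harg : (x - y) / (2 * x) * x + (x + y) / (2 * x) * -x = -y := by
    field_simp
    ring
  rw [harg] at hc
  rw [Real.cosh_eq, Real.sinh_eq]
  refine hc.trans (le_of_eq ?_)
  field_simp
  ring

/-- Core per-step polynomial inequality. -/
lemma core_poly {x G Rv : ℝ} (hx0 : 0 ≤ x) (hxG : x ≤ G) (hGR : G ≤ Rv) (hR1 : Rv ≤ 1) :
    G * x ≤ (G * Real.sinh x - Rv * (Real.cosh x - 1)) * (1 + Rv) := by
  have hx1 : x ≤ 1 := hxG.trans (hGR.trans hR1)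
  have hs := sinh_lower hx0 hx1
  have hc := cosh_upper hx0 hx1
  have hG1 : G ≤ 1 := hGR.trans hR1
  have hR0 : 0 ≤ Rv := (hx0.trans hxG).trans hGR
  have hG0 : 0 ≤ G := hx0.trans hxG
  have hmid : G*x + G*x^3/6 - 5*G*x^4/96 - (Rv*x^2/2 + 5*Rv*x^4/96)
      ≤ G * Real.sinh x - Rv * (Real.cosh x - 1) := by
    have t1 := mul_le_mul_of_nonneg_left hs hG0
    have t2 := mul_le_mul_of_nonneg_left hc hR0
    nlinarith [t1, t2]
  have hmono := mul_le_mul_of_nonneg_right hmid (by linarith : (0:ℝ) ≤ 1 + Rv)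
  refine le_trans ?_ hmono
  nlinarith [mul_nonneg (mul_nonneg (sub_nonneg.2 hxG) hx0) hR0,
    mul_nonneg (mul_nonneg (mul_nonneg hR0 hx0) hx0) (sub_nonneg.2 hR1),
    mul_nonneg (mul_nonneg (by linarith : (0:ℝ) ≤ 1+Rv) (sub_nonneg.2 hxG)) (by positivity : (0:ℝ) ≤ x^3),
    mul_nonneg (mul_nonneg (by linarith : (0:ℝ) ≤ 1+Rv) (by linarith : (0:ℝ) ≤ 16 - 5*G - 5*Rv)) (by positivity : (0:ℝ) ≤ x^4)]




/-- Pure-arithmetic endgame of the descent step. -/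
lemma step_arith {γ nv nv' Rv Rv' G x : ℝ} (hγ : 0 < γ) (hRv0 : 0 < Rv) (hRv1 : Rv ≤ 1)
    (hRv'0 : 0 < Rv') (hγg : γ * Rv ≤ G) (hGRv : G ≤ Rv) (hx0 : 0 < x) (hxG : x ≤ G)
    (hchord : Rv' ≤ Rv * Real.cosh x - G * Real.sinh x) (hnorm : nv' ≤ nv + x) :
    Rv' < Rv ∧ γ * nv' + Real.log Rv' + Rv' ≤ γ * nv + Real.log Rv + Rv := by
  set D : ℝ := G * Real.sinh x - Rv * (Real.cosh x - 1) with hD_def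
  have hcore : G * x ≤ D * (1 + Rv) := core_poly hx0.le hxG hGRv hRv1
  have hg0 : 0 < G := lt_of_lt_of_le (by positivity) hγg
  have hD0 : 0 < D := by nlinarith
  have hRv'le : Rv' ≤ Rv - D := by rw [hD_def]; nlinarith [hchord]
  have hdecr : Rv' < Rv := by linarith
  refine ⟨hdecr, ?_⟩
  have hlog : Real.log Rv' ≤ Real.log Rv + (Rv' / Rv - 1) := by
    have h1 : Real.log (Rv' / Rv) ≤ Rv' / Rv - 1 :=
      Real.log_le_sub_one_of_pos (by positivity)
    rw [Real.log_div hRv'0.ne' hRv0.ne'] at h1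
    linarith
  have hdiv : Rv' / Rv - 1 ≤ -(D / Rv) := by
    rw [div_sub_one hRv0.ne', ← neg_div]
    exact (div_le_div_iff_of_pos_right hRv0).2 (by linarith)
  have hγx : γ * x ≤ D / Rv + D := by
    have h1 : γ * x * Rv ≤ G * x := by nlinarith
    have h2 : γ * x ≤ D * (1 + Rv) / Rv := by
      rw [le_div_iff₀ hRv0]; nlinarith
    have h3 : D * (1 + Rv) / Rv = D / Rv + D := by field_simp
    linarith [h3 ▸ h2]
  nlinarith [mul_le_mul_of_nonneg_left hnorm hγ.le]


open scoped RealInnerProductSpace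




lemma step_lemma {n d : ℕ} (hn : 0 < n) (A : Fin n → EuclideanSpace ℝ (Fin d))
    (hA : ∀ i, ‖A i‖ ≤ 1)
    (γ : ℝ) (hγ : 0 < γ) (ubar : EuclideanSpace ℝ (Fin d)) (hunorm : ‖ubar‖ = 1)
    (hmargin : ∀ i, ⟪A i, ubar⟫ ≤ -γ)
    (R : EuclideanSpace ℝ (Fin d) → ℝ)
    (hR : ∀ w, R w = (1 / (n : ℝ)) * ∑ i, Real.exp ⟪A i, w⟫)
    (v : EuclideanSpace ℝ (Fin d)) (e : ℝ) (he0 : 0 < e) (he1 : e ≤ 1)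
    (hRle : R v ≤ 1) (v' : EuclideanSpace ℝ (Fin d))
    (hv' : v' = v - e • ∑ i, ((1 / (n : ℝ)) * Real.exp ⟪A i, v⟫) • A i) :
    R v' < R v ∧
    γ * ‖v'‖ + Real.log (R v') + R v' ≤ γ * ‖v‖ + Real.log (R v) + R v ∧
    ⟪v, ubar⟫ + e * γ * R v ≤ ⟪v', ubar⟫ := by
  classical
  have hne : (Finset.univ : Finset (Fin n)).Nonempty := by
    simpa [Finset.univ_nonempty_iff] using Fin.pos_iff_nonempty.mp hn
  set p : Fin n → ℝ := fun i => (1 / (n : ℝ)) * Real.exp ⟪A i, v⟫ with hp_def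
  have hp : ∀ i, 0 < p i := fun i => by
    have : (0:ℝ) < (n:ℝ) := by exact_mod_cast hn
    positivity
  set g : EuclideanSpace ℝ (Fin d) := ∑ i, p i • A i with hg_def
  set c : Fin n → ℝ := fun i => ⟪A i, g⟫ with hc_def
  have hRv_eq : R v = ∑ i, p i := by rw [hR, Finset.mul_sum]
  have hRv0 : 0 < R v := by
    rw [hRv_eq]; exact Finset.sum_pos (fun i _ => hp i) hne
  -- ‖g‖ ≤ R v
  have hgR : ‖g‖ ≤ R v := by
    rw [hRv_eq, hg_def]
    refine (norm_sum_le _ _).trans ?_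
    apply Finset.sum_le_sum
    intro i _
    rw [norm_smul, Real.norm_eq_abs, abs_of_pos (hp i)]
    nlinarith [hA i, (hp i).le, norm_nonneg (A i)]
  -- ⟪g, ubar⟫ ≤ -γ R v
  have hgu : ⟪g, ubar⟫ ≤ -γ * R v := by
    rw [hg_def, sum_inner, hRv_eq]
    calc (∑ i, ⟪p i • A i, ubar⟫) = ∑ i, p i * ⟪A i, ubar⟫ := by
          simp [real_inner_smul_left, Finset.mul_sum, mul_assoc]
      _ ≤ ∑ i, p i * (-γ) := by
          apply Finset.sum_le_sum
          intro i _
          exact mul_le_mul_of_nonneg_left (hmargin i) (hp i).le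
      _ = -γ * ∑ i, p i := by rw [← Finset.sum_mul]; ring
  have hγg : γ * R v ≤ ‖g‖ := by
    have h3 : |⟪g, ubar⟫| ≤ ‖g‖ * ‖ubar‖ := abs_real_inner_le_norm g ubar
    rw [hunorm, mul_one] at h3
    have h2 := neg_abs_le (⟪g, ubar⟫ : ℝ)
    linarith [abs_nonneg (⟪g, ubar⟫ : ℝ)]
  have hg0 : 0 < ‖g‖ := lt_of_lt_of_le (by positivity) hγg
  set x : ℝ := e * ‖g‖ with hx_def
  have hx0 : 0 < x := by positivity
  have hxg : x ≤ ‖g‖ := by nlinarith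
  have hc_bound : ∀ i, |c i| ≤ ‖g‖ := by
    intro i
    have h1 : |c i| ≤ ‖A i‖ * ‖g‖ := abs_real_inner_le_norm (A i) g
    nlinarith [hA i, norm_nonneg (g : EuclideanSpace ℝ (Fin d))]
  have hgsq : ‖g‖^2 = ∑ i, p i * c i := by
    rw [← real_inner_self_eq_norm_sq]
    nth_rewrite 1 [hg_def]
    rw [sum_inner]
    simp [hc_def, real_inner_smul_left, Finset.mul_sum, mul_assoc]
  -- R v' as a sum
  have hinner' : ∀ i, ⟪A i, v'⟫ = ⟪A i, v⟫ - e * c i := by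
    intro i
    rw [hv', inner_sub_right, real_inner_smul_right]
  have hRv'_eq : R v' = ∑ i, p i * Real.exp (-(e * c i)) := by
    rw [hR, Finset.mul_sum]
    congr 1
    ext i
    rw [hinner' i, sub_eq_add_neg, Real.exp_add, hp_def]
    ring
  have hRv'0 : 0 < R v' := by
    rw [hRv'_eq]
    exact Finset.sum_pos (fun i _ => mul_pos (hp i) (Real.exp_pos _)) hne
  -- chord bound
  have hchord : R v' ≤ R v * Real.cosh x - ‖g‖ * Real.sinh x := by
    have h1 : ∀ i, p i * Real.exp (-(e * c i))
        ≤ p i * (Real.cosh x - (e * c i / x) * Real.sinh x) := by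
      intro i
      apply mul_le_mul_of_nonneg_left _ (hp i).le
      apply exp_chord hx0
      rw [abs_mul, abs_of_pos he0, hx_def]
      exact mul_le_mul_of_nonneg_left (hc_bound i) he0.le
    rw [hRv'_eq]
    refine (Finset.sum_le_sum (fun i _ => h1 i)).trans (le_of_eq ?_)
    have key : ‖g‖ * Real.sinh x = (e * Real.sinh x / x) * ∑ i, p i * c i := by
      rw [← hgsq, hx_def]; field_simp
    rw [hRv_eq, key, Finset.mul_sum, Finset.sum_mul, ← Finset.sum_sub_distrib]
    apply Finset.sum_congr rfl
    intro i _
    field_simp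
  have hnorm' : ‖v'‖ ≤ ‖v‖ + x := by
    rw [hv']
    refine (norm_sub_le _ _).trans ?_
    rw [norm_smul, Real.norm_eq_abs, abs_of_pos he0, ← hx_def]
  have hinner_step : ⟪v, ubar⟫ + e * γ * R v ≤ ⟪v', ubar⟫ := by
    rw [hv', inner_sub_left, real_inner_smul_left]
    have := mul_le_mul_of_nonneg_left hgu he0.le
    nlinarith
  have main := step_arith hγ hRv0 hRle hRv'0 hγg hgR hx0 hxg hchord hnorm'
  exact ⟨main.1, main.2, hinner_step⟩


open scoped RealInnerProductSpace

lemma hasGradient_expsum {n d : ℕ} (A : Fin n → EuclideanSpace ℝ (Fin d))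
    (v : EuclideanSpace ℝ (Fin d)) :
    HasGradientAt (fun w => (1 / (n : ℝ)) * ∑ i, Real.exp ⟪A i, w⟫)
      (∑ i, ((1 / (n : ℝ)) * Real.exp ⟪A i, v⟫) • A i) v := by
  rw [hasGradientAt_iff_hasFDerivAt]
  have hinner : ∀ i : Fin n, HasFDerivAt (fun w : EuclideanSpace ℝ (Fin d) => ⟪A i, w⟫)
      (innerSL ℝ (A i)) v := fun i => (innerSL ℝ (A i)).hasFDerivAt
  have hexp : ∀ i : Fin n, HasFDerivAt (fun w : EuclideanSpace ℝ (Fin d) => Real.exp ⟪A i, w⟫)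
      (Real.exp ⟪A i, v⟫ • innerSL ℝ (A i)) v := fun i => (hinner i).exp
  have hsum := HasFDerivAt.fun_sum (fun i (_ : i ∈ Finset.univ) => hexp i)
  have hmul := hsum.const_mul (1 / (n : ℝ))
  refine hmul.congr_fderiv ?_
  symm
  apply ContinuousLinearMap.ext
  intro y
  simp only [ContinuousLinearMap.smul_apply, ContinuousLinearMap.coe_sum', Finset.sum_apply,
    InnerProductSpace.toDual_apply_apply, innerSL_apply_apply, smul_eq_mul]
  rw [sum_inner]
  rw [Finset.mul_sum]
  congr 1
  ext i
  rw [real_inner_smul_left]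
  ring


/-- Final numeric assembly lemma. -/
lemma final_bound {γ T s c K : ℝ} (hγ : 0 < γ) (hT : 0 < T) (hs : 0 < s) (hsT : s ≤ T)
    (hc0 : 0 ≤ c) (hcK : γ * T - K ≤ γ * c) (hK1 : 1 ≤ K) :
    2 - 2 * (c / s) ≤ 2 * K / (γ * T) := by
  rcases le_or_gt (γ * T) K with h | h
  · have h1 : (1:ℝ) ≤ K / (γ * T) := by
      rw [le_div_iff₀ (by positivity)]; linarith
    have h2 : 0 ≤ c / s := by positivity
    have : 2 * K / (γ * T) = 2 * (K / (γ * T)) := by ring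
    rw [this]
    linarith
  · have hc0' : 0 < c := by
      nlinarith
    have h1 : c / T ≤ c / s := div_le_div_of_nonneg_left hc0 hs hsT
    have h2 : (γ * T - K) / (γ * T) ≤ c / T := by
      rw [div_le_div_iff₀ (by positivity) hT]
      nlinarith
    have h3 : 2 - 2 * ((γ * T - K) / (γ * T)) = 2 * K / (γ * T) := by
      field_simp
      ring
    linarith


open scoped RealInnerProductSpace







/-- Margin-direction convergence in the separable case for the exponential loss: gradient
descent iterates and the norm-constrained optima satisfy
`max{|w_t/|w_t| − ū|², |w̄_t/|w̄_t| − ū|²} ≤ (2 + 2 ln n)/(|w_t| γ)`. -/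
theorem directional_convergence_separable_exp {n d : ℕ} (hn : 0 < n)
    (A : Fin n → EuclideanSpace ℝ (Fin d)) (hA : ∀ i, ‖A i‖ ≤ 1)
    (R : EuclideanSpace ℝ (Fin d) → ℝ)
    (hR : ∀ w, R w = (1 / (n : ℝ)) * ∑ i, Real.exp ⟪A i, w⟫)
    (γ : ℝ) (hγ : 0 < γ) (qbar : Fin n → ℝ)
    (hq0 : ∀ i, 0 ≤ qbar i) (hq1 : (∑ i, qbar i) = 1)
    (ubar : EuclideanSpace ℝ (Fin d))
    (hubar : ubar = -(γ⁻¹ • ∑ i, qbar i • A i)) (hunorm : ‖ubar‖ = 1)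
    (hmargin : ∀ i, ⟪A i, ubar⟫ ≤ -γ)
    (η : ℕ → ℝ) (hη : ∀ j, 0 < η j ∧ η j ≤ 1)
    (w : ℕ → EuclideanSpace ℝ (Fin d)) (hw0 : w 0 = 0)
    (hiter : ∀ j, w (j + 1) = w j - η j • gradient R (w j))
    (t : ℕ) (ht : 1 ≤ t)
    (wbar : EuclideanSpace ℝ (Fin d)) (hwbar_norm : ‖wbar‖ ≤ ‖w t‖)
    (hwbar_min : ∀ v : EuclideanSpace ℝ (Fin d), ‖v‖ ≤ ‖w t‖ → R wbar ≤ R v) :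
    max (‖(‖w t‖)⁻¹ • w t - ubar‖ ^ 2) (‖(‖wbar‖)⁻¹ • wbar - ubar‖ ^ 2) ≤
      (2 + 2 * Real.log n) / (‖w t‖ * γ) := by
  classical
  have hn0 : (0:ℝ) < (n:ℝ) := by exact_mod_cast hn
  have hne : (Finset.univ : Finset (Fin n)).Nonempty := by
    simpa [Finset.univ_nonempty_iff] using Fin.pos_iff_nonempty.mp hn
  -- positivity of R
  have hRpos : ∀ v, 0 < R v := by
    intro v
    rw [hR]
    have : 0 < ∑ i, Real.exp ⟪A i, v⟫ :=
      Finset.sum_pos (fun i _ => Real.exp_pos _) hne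
    positivity
  -- R 0 = 1
  have hR0eq : R 0 = 1 := by
    rw [hR]
    simp [inner_zero_right]
    field_simp
  -- gradient formula
  have hgrad : ∀ v, gradient R v = ∑ i, ((1 / (n : ℝ)) * Real.exp ⟪A i, v⟫) • A i := by
    intro v
    have hRfun : R = fun w => (1 / (n : ℝ)) * ∑ i, Real.exp ⟪A i, w⟫ := funext hR
    rw [hRfun]
    exact (hasGradient_expsum A v).gradient
  have hiter' : ∀ j, w (j + 1) = w j - η j • ∑ i, ((1 / (n : ℝ)) * Real.exp ⟪A i, w j⟫) • A i := by
    intro j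
    rw [hiter j, hgrad]
  -- induction invariant
  have inv : ∀ j, R (w j) ≤ 1 ∧
      γ * ‖w j‖ + Real.log (R (w j)) + R (w j) ≤ 1 ∧
      0 ≤ ⟪w j, ubar⟫ ∧ (1 ≤ j → R (w j) < 1 ∧ 0 < ⟪w j, ubar⟫) := by
    intro j
    induction j with
    | zero =>
      refine ⟨by rw [hw0, hR0eq], ?_, by rw [hw0]; simp, by omega⟩
      rw [hw0, hR0eq]
      simp
    | succ k ih =>
      obtain ⟨ih1, ih2, ih3, _⟩ := ih
      obtain ⟨s1, s2, s3⟩ := step_lemma hn A hA γ hγ ubar hunorm hmargin R hR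
        (w k) (η k) (hη k).1 (hη k).2 ih1 (w (k+1)) (hiter' k)
      have hRk := hRpos (w k)
      have hstep : 0 < η k * γ * R (w k) := mul_pos (mul_pos (hη k).1 hγ) hRk
      refine ⟨le_of_lt (lt_of_lt_of_le s1 ih1), le_trans s2 ih2, by linarith, ?_⟩
      intro _
      exact ⟨lt_of_lt_of_le s1 ih1, by linarith⟩
  -- facts at time t
  obtain ⟨hRt1, hΦt, hwtub0, hstrict⟩ := inv t
  obtain ⟨hRtlt1, hwtubpos⟩ := hstrict ht
  have hT0 : 0 < ‖w t‖ := by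
    have h1 : ⟪w t, ubar⟫ ≤ ‖w t‖ * ‖ubar‖ := real_inner_le_norm _ _
    rw [hunorm, mul_one] at h1
    linarith
  have hRtpos := hRpos (w t)
  have hlogRt : Real.log (R (w t)) ≤ 1 - γ * ‖w t‖ := by linarith
  -- Fenchel-Young bound
  have fenchel : ∀ v : EuclideanSpace ℝ (Fin d),
      -(Real.log n + Real.log (R v)) ≤ γ * ⟪v, ubar⟫ := by
    intro v
    have hnRv : (0:ℝ) < (n:ℝ) * R v := mul_pos hn0 (hRpos v)
    have hAi : ∀ i, ⟪A i, v⟫ ≤ Real.log ((n:ℝ) * R v) := by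
      intro i
      rw [Real.le_log_iff_exp_le hnRv]
      have h1 : Real.exp ⟪A i, v⟫ ≤ ∑ k, Real.exp ⟪A k, v⟫ :=
        Finset.single_le_sum (f := fun k => Real.exp ⟪A k, v⟫)
          (fun k _ => (Real.exp_pos _).le) (Finset.mem_univ i)
      have h2 : (n:ℝ) * R v = ∑ k, Real.exp ⟪A k, v⟫ := by
        rw [hR, ← mul_assoc, mul_one_div, div_self hn0.ne', one_mul]
      linarith
    have hsum : ∑ i, qbar i * ⟪A i, v⟫ ≤ Real.log ((n:ℝ) * R v) := by
      calc ∑ i, qbar i * ⟪A i, v⟫ ≤ ∑ i, qbar i * Real.log ((n:ℝ) * R v) := by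
            apply Finset.sum_le_sum
            intro i _
            exact mul_le_mul_of_nonneg_left (hAi i) (hq0 i)
        _ = Real.log ((n:ℝ) * R v) := by rw [← Finset.sum_mul, hq1, one_mul]
    have hinner : γ * ⟪v, ubar⟫ = -∑ i, qbar i * ⟪A i, v⟫ := by
      rw [hubar, inner_neg_right, real_inner_smul_right, inner_sum]
      have : ∀ i, ⟪v, qbar i • A i⟫ = qbar i * ⟪A i, v⟫ := by
        intro i
        rw [real_inner_smul_right, real_inner_comm]
      rw [Finset.sum_congr rfl (fun i _ => this i)]
      field_simp
    rw [hinner]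
    rw [Real.log_mul (ne_of_gt hn0) (ne_of_gt (hRpos v))] at hsum
    linarith
  -- wbar facts
  have hTub_norm : ‖(‖w t‖) • ubar‖ ≤ ‖w t‖ := by
    rw [norm_smul, Real.norm_eq_abs, abs_of_pos hT0, hunorm, mul_one]
  have hRwbar_le_exp : R wbar ≤ Real.exp (-(γ * ‖w t‖)) := by
    refine (hwbar_min _ hTub_norm).trans ?_
    rw [hR]
    have h1 : ∀ i, Real.exp ⟪A i, (‖w t‖) • ubar⟫ ≤ Real.exp (-(γ * ‖w t‖)) := by
      intro i
      apply Real.exp_le_exp.2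
      rw [real_inner_smul_right]
      nlinarith [hmargin i]
    calc (1/(n:ℝ)) * ∑ i, Real.exp ⟪A i, (‖w t‖) • ubar⟫
        ≤ (1/(n:ℝ)) * ∑ i, Real.exp (-(γ * ‖w t‖)) := by
          have hsum := Finset.sum_le_sum (fun i (_ : i ∈ Finset.univ) => h1 i)
          exact mul_le_mul_of_nonneg_left hsum (by positivity)
      _ = Real.exp (-(γ * ‖w t‖)) := by
          simp only [Finset.sum_const, Finset.card_univ, Fintype.card_fin, nsmul_eq_mul]
          field_simp
  have hlogwbar : Real.log (R wbar) ≤ -(γ * ‖w t‖) := by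
    calc Real.log (R wbar) ≤ Real.log (Real.exp (-(γ * ‖w t‖))) :=
          Real.log_le_log (hRpos wbar) hRwbar_le_exp
      _ = -(γ * ‖w t‖) := Real.log_exp _
  have hwbar_ne : wbar ≠ 0 := by
    intro h0
    have h1 : R wbar ≤ R (w t) := hwbar_min (w t) le_rfl
    rw [h0, hR0eq] at h1
    linarith
  have hs0 : 0 < ‖wbar‖ := norm_pos_iff.2 hwbar_ne
  -- reflection argument: 0 ≤ ⟪wbar, ubar⟫
  have hwbar_inner : 0 ≤ ⟪wbar, ubar⟫ := by
    by_contra hlt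
    push_neg at hlt
    set cc : ℝ := ⟪wbar, ubar⟫ with hcc
    set v' : EuclideanSpace ℝ (Fin d) := wbar - (2 * cc) • ubar with hv'
    have hnormv' : ‖v'‖ = ‖wbar‖ := by
      have hsq : ‖v'‖^2 = ‖wbar‖^2 := by
        rw [hv', norm_sub_sq_real, norm_smul, real_inner_smul_right, Real.norm_eq_abs,
          hunorm, mul_pow, sq_abs]
        ring
      have habs := (sq_eq_sq_iff_abs_eq_abs _ _).1 hsq
      rwa [abs_of_nonneg (norm_nonneg _), abs_of_nonneg (norm_nonneg _)] at habs
    have hmin := hwbar_min v' (hnormv' ▸ hwbar_norm)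
    have hlt' : R v' < R wbar := by
      rw [hR, hR]
      apply mul_lt_mul_of_pos_left _ (by positivity)
      apply Finset.sum_lt_sum_of_nonempty hne
      intro i _
      apply Real.exp_lt_exp.2
      rw [hv', inner_sub_right, real_inner_smul_right]
      nlinarith [hmargin i]
    linarith
  -- Fenchel at w t and wbar
  have hfen_t : γ * ‖w t‖ - (1 + Real.log n) ≤ γ * ⟪w t, ubar⟫ := by
    have := fenchel (w t)
    linarith
  have hfen_wbar : γ * ‖w t‖ - (1 + Real.log n) ≤ γ * ⟪wbar, ubar⟫ := by
    have := fenchel wbar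
    linarith
  have hlogn0 : 0 ≤ Real.log n := Real.log_nonneg (by exact_mod_cast hn)
  have hK1 : (1:ℝ) ≤ 1 + Real.log n := by linarith
  -- norm expansion
  have hexpand : ∀ v : EuclideanSpace ℝ (Fin d), 0 < ‖v‖ →
      ‖(‖v‖)⁻¹ • v - ubar‖^2 = 2 - 2 * (⟪v, ubar⟫ / ‖v‖) := by
    intro v hv
    rw [norm_sub_sq_real, norm_smul, real_inner_smul_left, Real.norm_eq_abs,
      abs_of_pos (inv_pos.2 hv), hunorm]
    rw [mul_pow, inv_pow]
    rw [inv_mul_eq_div]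
    field_simp
    ring
  -- final bounds
  have hb1 : ‖(‖w t‖)⁻¹ • w t - ubar‖^2 ≤ 2 * (1 + Real.log n) / (γ * ‖w t‖) := by
    rw [hexpand (w t) hT0]
    exact final_bound hγ hT0 hT0 le_rfl (le_of_lt hwtubpos) hfen_t hK1
  have hb2 : ‖(‖wbar‖)⁻¹ • wbar - ubar‖^2 ≤ 2 * (1 + Real.log n) / (γ * ‖w t‖) := by
    rw [hexpand wbar hs0]
    exact final_bound hγ hT0 hs0 hwbar_norm hwbar_inner hfen_wbar hK1
  have hrhs : 2 * (1 + Real.log n) / (γ * ‖w t‖) = (2 + 2 * Real.log n) / (‖w t‖ * γ) := by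
    rw [mul_comm γ (‖w t‖)]
    ring_nf
  rw [← hrhs]
  exact max_le hb1 hb2
end

section
/- For ℓ = exp and data matrix A with rows |A_i| ≤ 1 whose separable part A_c has margin γ over S^⊥ (i.e. ⟨A_i, ū⟩ ≤ −γ for rows of A_c and A_S ū = 0 for unit ū ∈ S^⊥), any w ∈ ℝ^d satisfies |∇R(w)| ≥ γ R_c(w), where R_c(w) = (1/n)Σ_{i ∈ c-part} exp(⟨A_i, w⟩). -/
open scoped RealInnerProductSpace

/-- Gradient norm lower bound for the exponential loss: pairing with the maximum margin
direction gives `|∇R(w)| ≥ γ R_c(w)`, where `R_c` is the risk over the separable rows. -/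
theorem gradient_norm_lower_bound_exp {n d : ℕ} (hn : 0 < n)
    (A : Fin n → EuclideanSpace ℝ (Fin d)) (hA : ∀ i, ‖A i‖ ≤ 1)
    (R : EuclideanSpace ℝ (Fin d) → ℝ)
    (hR : ∀ w, R w = (1 / (n : ℝ)) * ∑ i, Real.exp ⟪A i, w⟫)
    (C : Finset (Fin n)) (γ : ℝ) (hγ : 0 < γ)
    (ubar : EuclideanSpace ℝ (Fin d)) (hunorm : ‖ubar‖ = 1)
    (hmargin : ∀ i ∈ C, ⟪A i, ubar⟫ ≤ -γ)
    (hperp : ∀ i ∉ C, ⟪A i, ubar⟫ = 0)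
    (w : EuclideanSpace ℝ (Fin d)) :
    ‖gradient R w‖ ≥ γ * ((1 / (n : ℝ)) * ∑ i ∈ C, Real.exp ⟪A i, w⟫) := by
  -- the gradient
  set g : EuclideanSpace ℝ (Fin d) :=
    (1 / (n : ℝ)) • ∑ i, Real.exp ⟪A i, w⟫ • A i with hg
  have hgrad : HasGradientAt R g w := by
    have hfd : HasFDerivAt R
        ((1 / (n : ℝ)) • ∑ i, Real.exp ⟪A i, w⟫ • innerSL ℝ (A i)) w := by
      have h1 : ∀ i : Fin n, HasFDerivAt (fun v => Real.exp ⟪A i, v⟫)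
          (Real.exp ⟪A i, w⟫ • innerSL ℝ (A i)) w := fun i =>
        (Real.hasDerivAt_exp _).comp_hasFDerivAt w ((innerSL ℝ (A i)).hasFDerivAt)
      have hsum : HasFDerivAt (fun v => ∑ i, Real.exp ⟪A i, v⟫)
          (∑ i, Real.exp ⟪A i, w⟫ • innerSL ℝ (A i)) w := HasFDerivAt.fun_sum fun i _ => h1 i
      have := hsum.fun_const_smul (1 / (n : ℝ))
      have hRe : R = fun v => (1 / (n : ℝ)) * ∑ i, Real.exp ⟪A i, v⟫ := funext hR
      rw [hRe]
      simpa [smul_eq_mul] using this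
    rw [hasFDerivAt_iff_hasGradientAt] at hfd
    convert hfd using 1
    apply (InnerProductSpace.toDual ℝ _).injective
    ext v
    simp [hg, InnerProductSpace.toDual_symm_apply, inner_smul_left, inner_sum,
      real_inner_smul_left]
  have hgval : gradient R w = g := hgrad.gradient
  have key : ⟪g, -ubar⟫ ≥ γ * ((1 / (n : ℝ)) * ∑ i ∈ C, Real.exp ⟪A i, w⟫) := by
    rw [hg]
    rw [inner_neg_right, real_inner_smul_left, sum_inner]
    have hsum : ∑ i, ⟪Real.exp ⟪A i, w⟫ • A i, ubar⟫
        ≤ ∑ i ∈ C, Real.exp ⟪A i, w⟫ * (-γ) := by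
      rw [← Finset.sum_subset (Finset.subset_univ C)]
      · apply Finset.sum_le_sum
        intro i hi
        rw [real_inner_smul_left]
        exact mul_le_mul_of_nonneg_left (hmargin i hi) (Real.exp_pos _).le
      · intro i _ hi
        rw [real_inner_smul_left, hperp i hi, mul_zero]
    have hn' : (0:ℝ) < 1 / (n : ℝ) := by positivity
    have := mul_le_mul_of_nonneg_left hsum hn'.le
    have h2 : -(1 / (n : ℝ) * ∑ i, ⟪Real.exp ⟪A i, w⟫ • A i, ubar⟫)
        ≥ -(1 / (n : ℝ) * ∑ i ∈ C, Real.exp ⟪A i, w⟫ * (-γ)) := by linarith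
    calc -(1 / (n : ℝ) * ∑ i, ⟪Real.exp ⟪A i, w⟫ • A i, ubar⟫)
        ≥ -(1 / (n : ℝ) * ∑ i ∈ C, Real.exp ⟪A i, w⟫ * (-γ)) := h2
      _ = γ * ((1 / (n : ℝ)) * ∑ i ∈ C, Real.exp ⟪A i, w⟫) := by
          rw [← Finset.sum_mul]; ring
  have hle : ⟪g, -ubar⟫ ≤ ‖g‖ := by
    calc ⟪g, -ubar⟫ ≤ ‖g‖ * ‖-ubar‖ := real_inner_le_norm _ _
      _ = ‖g‖ := by rw [norm_neg, hunorm, mul_one]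
  rw [hgval]
  linarith
end
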